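/- Let T be a perfect unit-length tree of height α ∈ ℕ with n = 2^α leaves. The values of k ∈ {1,…,n} that maximise m(T,k), the number of size-k maxPD sets, are k = ⌊2n/3⌋ for all n and, additionally, k = ⌊2n/3⌋ + 1 when n ≡ 1 (mod 3). -/

import Mathlib

/-!
Rooted phylogenetic `X`-trees with positive edge lengths.

A tree on a finite vertex type `V` is encoded by its parent function: the root
has no parent, every other vertex has one, and iterating the parent function
reaches the root.  The edge into a non-root vertex `v` has length `len v`, and
`hgt v` is the distance from the root to `v`.  Leaves are the vertices with no
children; the taxon set `X` of the paper is the set `leaves` of leaves.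
Every non-leaf, non-root vertex has out-degree (number of children) at least 2.
-/

noncomputable section

attribute [local instance] Classical.propDecidable

structure PhyloTree (V : Type) [Fintype V] [DecidableEq V] where
  root : V
  parent : V → Option V
  len : V → ℝ
  hgt : V → ℝ
  parent_root : parent root = none
  parent_isSome : ∀ v, v ≠ root → (parent v).isSome
  reaches_root : ∀ v, Relation.ReflTransGen (fun a b => parent a = some b) v root
  hgt_root : hgt root = 0
  hgt_eq : ∀ v u, parent v = some u → hgt v = hgt u + len v
  len_pos : ∀ v, v ≠ root → 0 < len v
  outdeg_ge_two : ∀ v, v ≠ root → (∃ u, parent u = some v) →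
    2 ≤ Set.ncard {u | parent u = some v}

namespace PhyloTree

variable {V : Type} [Fintype V] [DecidableEq V]

/-- `T.step a b` : `b` is the parent of `a`. -/
def step (T : PhyloTree V) (a b : V) : Prop := T.parent a = some b

/-- `T.anc u v` : `u` is an ancestor of `v`, i.e. `u` lies on the (unique) path
from the root to `v` (reflexively). -/
def anc (T : PhyloTree V) (u v : V) : Prop := Relation.ReflTransGen T.step v u

/-- a leaf is a vertex with no children. -/
def IsLeaf (T : PhyloTree V) (v : V) : Prop := ∀ u, T.parent u ≠ some v

/-- the leaf set (the taxon set `X`). -/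
def leaves (T : PhyloTree V) : Set V := {v | T.IsLeaf v}

/-- Phylogenetic diversity of a set `Y`: the total length of all edges `e`
whose set of descendant leaves meets `Y` (the edge into a non-root vertex `v`
has length `T.len v`). -/
def PD (T : PhyloTree V) (Y : Set V) : ℝ :=
  ∑ v : V, if v ≠ T.root ∧ ∃ x ∈ Y, T.IsLeaf x ∧ T.anc v x then T.len v else 0

/-- the ultrametric condition: all leaves are at the same distance from the root. -/
def Ultrametric (T : PhyloTree V) : Prop :=
  ∀ x y, T.IsLeaf x → T.IsLeaf y → T.hgt x = T.hgt y

/-- `R d`: the set of vertices within distance `d` above some leaf. -/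
def R (T : PhyloTree V) (d : ℝ) : Set V :=
  {v | ∃ x, T.IsLeaf x ∧ T.anc v x ∧ T.hgt x - T.hgt v ≤ d}

/-- adjacency in the forest induced by `T` on a vertex set `S`. -/
def adjIn (T : PhyloTree V) (S : Set V) (u v : V) : Prop :=
  u ∈ S ∧ v ∈ S ∧ (T.parent u = some v ∨ T.parent v = some u)

/-- the connected components of the forest induced by `T` on `S`. -/
def components (T : PhyloTree V) (S : Set V) : Set (Set V) :=
  {C | ∃ v ∈ S, C = S ∩ {u | Relation.ReflTransGen (T.adjIn S) v u}}

/-- `c d`: the number of connected components of the forest `T[R(d)]`. -/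
def ccount (T : PhyloTree V) (d : ℝ) : ℕ := (T.components (T.R d)).ncard

/-- `k` is a branching value if `T[R(d)]` has exactly `k` components for some `d ≥ 0`. -/
def IsBranchingValue (T : PhyloTree V) (k : ℕ) : Prop := ∃ d : ℝ, 0 ≤ d ∧ T.ccount d = k

/-- the branching distance `d_k = min {d : c(d) = k}`. -/
def branchDist (T : PhyloTree V) (k : ℕ) : ℝ := sInf {d | 0 ≤ d ∧ T.ccount d = k}

/-- `k⁻`: the largest branching value `≤ k`. -/
def kminus (T : PhyloTree V) (k : ℕ) : ℕ := sSup {j | j ≤ k ∧ T.IsBranchingValue j}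

/-- `k⁺`: the smallest branching value `≥ k`. -/
def kplus (T : PhyloTree V) (k : ℕ) : ℕ := sInf {j | k ≤ j ∧ T.IsBranchingValue j}

/-- `A` is a size-`k` maxPD set. -/
def IsMaxPD (T : PhyloTree V) (k : ℕ) (A : Set V) : Prop :=
  A ⊆ T.leaves ∧ A.ncard = k ∧ ∀ Y ⊆ T.leaves, Y.ncard = k → T.PD Y ≤ T.PD A

/-- `A` is a size-`k` minPD set. -/
def IsMinPD (T : PhyloTree V) (k : ℕ) (A : Set V) : Prop :=
  A ⊆ T.leaves ∧ A.ncard = k ∧ ∀ Y ⊆ T.leaves, Y.ncard = k → T.PD A ≤ T.PD Y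

/-- `m T k`: the number of size-`k` maxPD sets of `T`. -/
def m (T : PhyloTree V) (k : ℕ) : ℕ := {A : Set V | T.IsMaxPD k A}.ncard

/-- `T` is binary: every non-leaf vertex has exactly two children. -/
def Binary (T : PhyloTree V) : Prop :=
  ∀ v, ¬ T.IsLeaf v → Set.ncard {u | T.parent u = some v} = 2

end PhyloTree

namespace PhyloTree

variable {V : Type} [Fintype V] [DecidableEq V]

/-- a perfect unit-length tree of height `α`: a rooted binary phylogenetic tree
in which every edge has length `1` and every root-to-leaf path has exactly `α`
edges (so every leaf is at distance `α` from the root). -/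
def PerfectUnitLength (T : PhyloTree V) (α : ℕ) : Prop :=
  T.Binary ∧ (∀ v, v ≠ T.root → T.len v = 1) ∧ ∀ x, T.IsLeaf x → T.hgt x = (α : ℝ)

end PhyloTree
namespace PhyloTree

open Finset

variable {V : Type} [Fintype V] [DecidableEq V]

/-- children of `v` as a finset -/
def childrenF (T : PhyloTree V) (v : V) : Finset V :=
  Finset.univ.filter (fun u => T.parent u = some v)

/-- level `j` as a finset -/
def LevF (T : PhyloTree V) (j : ℕ) : Finset V :=
  Finset.univ.filter (fun v => T.hgt v = (j : ℝ))

/-- leaves below `v` -/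
def lbF (T : PhyloTree V) (v : V) : Finset V :=
  Finset.univ.filter (fun x => T.IsLeaf x ∧ T.anc v x)

/-- leaves as a finset -/
def leavesF (T : PhyloTree V) : Finset V := Finset.univ.filter T.IsLeaf

/-- covered vertices at level `j` -/
def covF (T : PhyloTree V) (j : ℕ) (A : Finset V) : Finset V :=
  (T.LevF j).filter (fun v => ∃ x ∈ A, T.anc v x)

variable {T : PhyloTree V} {α : ℕ}

lemma ne_root_of_parent {v u : V} (h : T.parent v = some u) : v ≠ T.root := by
  intro hv; rw [hv, T.parent_root] at h; cases h

lemma root_ind (P : V → Prop) (h0 : P T.root)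
    (hs : ∀ v u, T.parent v = some u → P u → P v) (v : V) : P v :=
  Relation.ReflTransGen.head_induction_on (T.reaches_root v) h0
    (fun h _ ih => hs _ _ h ih)

lemma hgt_step (hT : T.PerfectUnitLength α) {v u : V} (h : T.parent v = some u) :
    T.hgt v = T.hgt u + 1 := by
  rw [T.hgt_eq v u h, hT.2.1 v (ne_root_of_parent h)]

lemma hgt_nat (hT : T.PerfectUnitLength α) (v : V) : ∃ n : ℕ, T.hgt v = n := by
  refine root_ind (T := T) (fun v => ∃ n : ℕ, T.hgt v = n) ⟨0, by simp [T.hgt_root]⟩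
    (fun v u h ih => ?_) v
  obtain ⟨n, hn⟩ := ih
  exact ⟨n + 1, by rw [hgt_step hT h, hn]; push_cast; ring⟩

lemma anc_refl (v : V) : T.anc v v := Relation.ReflTransGen.refl

lemma anc_of_parent {v u : V} (h : T.parent v = some u) : T.anc u v :=
  Relation.ReflTransGen.single h

lemma anc_trans {u w x : V} (h1 : T.anc u w) (h2 : T.anc w x) : T.anc u x :=
  Relation.ReflTransGen.trans h2 h1

lemma anc_eq_or_lt (hT : T.PerfectUnitLength α) {u v : V} (h : T.anc u v) :
    u = v ∨ T.hgt u + 1 ≤ T.hgt v := by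
  have h' : Relation.ReflTransGen T.step v u := h
  clear h
  induction h' with
  | refl => exact Or.inl rfl
  | @tail c b h1 h2 ih =>
      have hb : T.hgt c = T.hgt b + 1 := hgt_step hT h2
      rcases ih with rfl | hlt
      · exact Or.inr (by linarith)
      · exact Or.inr (by linarith)

lemma hgt_le_of_anc (hT : T.PerfectUnitLength α) {u v : V} (h : T.anc u v) :
    T.hgt u ≤ T.hgt v := by
  rcases anc_eq_or_lt hT h with rfl | hlt
  · exact le_rfl
  · linarith

lemma hgt_lt_of_anc (hT : T.PerfectUnitLength α) {u v : V} (h : T.anc u v) (hne : u ≠ v) :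
    T.hgt u + 1 ≤ T.hgt v := by
  rcases anc_eq_or_lt hT h with rfl | hlt
  · exact absurd rfl hne
  · exact hlt

lemma eq_of_anc_hgt (hT : T.PerfectUnitLength α) {u v : V} (h : T.anc u v)
    (hh : T.hgt u = T.hgt v) : u = v := by
  by_contra hne
  have := hgt_lt_of_anc hT h hne
  linarith

lemma anc_comparable {u w x : V} (h1 : T.anc u x) (h2 : T.anc w x) :
    T.anc u w ∨ T.anc w u := by
  have h1' : Relation.ReflTransGen T.step x u := h1
  have H : ∀ y, Relation.ReflTransGen T.step x y →
      (Relation.ReflTransGen T.step y u ∨ Relation.ReflTransGen T.step u y) := by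
    refine Relation.ReflTransGen.head_induction_on h1' ?_ ?_
    · exact fun y hy => Or.inr hy
    · intro a c hac hcu ih y hay
      rcases hay.cases_head with rfl | ⟨c', hac', hc'y⟩
      · exact Or.inl (hcu.head hac)
      · have hac2 : T.parent a = some c := hac
        have hac2' : T.parent a = some c' := hac'
        have : c' = c := by rw [hac2] at hac2'; exact (Option.some_injective _ hac2').symm
        exact ih y (this ▸ hc'y)
  exact H w h2

lemma level_anc_unique (hT : T.PerfectUnitLength α) {u w x : V} (h1 : T.anc u x)
    (h2 : T.anc w x) (hh : T.hgt u = T.hgt w) : u = w := by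
  rcases anc_comparable h1 h2 with h | h
  · exact eq_of_anc_hgt hT h hh
  · exact (eq_of_anc_hgt hT h hh.symm).symm

lemma exists_child {v : V} (h : ¬ T.IsLeaf v) : ∃ u, T.parent u = some v := by
  unfold IsLeaf at h; push_neg at h; exact h

lemma exists_leaf_below (hT : T.PerfectUnitLength α) (v : V) :
    ∃ x, T.IsLeaf x ∧ T.anc v x := by
  suffices H : ∀ N (v : V),
      (Finset.univ.filter (fun u => T.hgt v < T.hgt u)).card ≤ N →
      ∃ x, T.IsLeaf x ∧ T.anc v x from H _ v le_rfl
  intro N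
  induction N with
  | zero =>
      intro v hv
      by_cases hl : T.IsLeaf v
      · exact ⟨v, hl, anc_refl v⟩
      · obtain ⟨c, hc⟩ := exists_child hl
        have hcm : c ∈ Finset.univ.filter (fun u => T.hgt v < T.hgt u) := by
          simp only [Finset.mem_filter, Finset.mem_univ, true_and]
          rw [hgt_step hT hc]; linarith
        have := Finset.card_pos.mpr ⟨c, hcm⟩
        omega
  | succ N ih =>
      intro v hv
      by_cases hl : T.IsLeaf v
      · exact ⟨v, hl, anc_refl v⟩
      · obtain ⟨c, hc⟩ := exists_child hl
        have hstep : T.hgt c = T.hgt v + 1 := hgt_step hT hc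
        have hsub : Finset.univ.filter (fun u => T.hgt c < T.hgt u) ⊆
            Finset.univ.filter (fun u => T.hgt v < T.hgt u) := by
          intro u hu
          simp only [Finset.mem_filter, Finset.mem_univ, true_and] at *
          linarith
        have hcm : c ∈ Finset.univ.filter (fun u => T.hgt v < T.hgt u) := by
          simp only [Finset.mem_filter, Finset.mem_univ, true_and]; linarith
        have hcn : c ∉ Finset.univ.filter (fun u => T.hgt c < T.hgt u) := by
          simp only [Finset.mem_filter, Finset.mem_univ, true_and]; linarith
        have hss := (Finset.ssubset_iff_of_subset hsub).2 ⟨c, hcm, hcn⟩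
        have hcard := Finset.card_lt_card hss
        obtain ⟨x, hx, hanc⟩ := ih c (by omega)
        exact ⟨x, hx, anc_trans (anc_of_parent hc) hanc⟩

lemma hgt_le_alpha (hT : T.PerfectUnitLength α) (v : V) : T.hgt v ≤ (α : ℝ) := by
  obtain ⟨x, hx, hanc⟩ := exists_leaf_below hT v
  have := hgt_le_of_anc hT hanc
  rw [hT.2.2 x hx] at this
  exact this

lemma isLeaf_of_hgt (hT : T.PerfectUnitLength α) {v : V} (h : T.hgt v = (α : ℝ)) :
    T.IsLeaf v := by
  by_contra hl
  obtain ⟨c, hc⟩ := exists_child hl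
  have h1 := hgt_step hT hc
  have h2 := hgt_le_alpha hT c
  linarith

lemma isLeaf_iff_hgt (hT : T.PerfectUnitLength α) {v : V} :
    T.IsLeaf v ↔ T.hgt v = (α : ℝ) := ⟨hT.2.2 v, isLeaf_of_hgt hT⟩

lemma hgt_nonneg (hT : T.PerfectUnitLength α) (v : V) : 0 ≤ T.hgt v := by
  obtain ⟨n, hn⟩ := hgt_nat hT v
  rw [hn]; positivity

lemma eq_root_of_hgt_zero (hT : T.PerfectUnitLength α) {v : V} (h : T.hgt v = 0) :
    v = T.root := by
  by_contra hv
  obtain ⟨u, hu⟩ := Option.isSome_iff_exists.mp (T.parent_isSome v hv)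
  have h1 := hgt_step hT hu
  have h2 := hgt_nonneg hT u
  rw [h] at h1; linarith

lemma mem_LevF {v : V} {j : ℕ} : v ∈ T.LevF j ↔ T.hgt v = (j : ℝ) := by
  simp [LevF]

lemma LevF_zero (hT : T.PerfectUnitLength α) : T.LevF 0 = {T.root} := by
  ext v
  simp only [mem_LevF, Finset.mem_singleton, Nat.cast_zero]
  constructor
  · exact fun h => eq_root_of_hgt_zero hT h
  · rintro rfl; exact T.hgt_root

lemma mem_childrenF {u v : V} : u ∈ T.childrenF v ↔ T.parent u = some v := by
  simp [childrenF]

lemma childrenF_subset_LevF (hT : T.PerfectUnitLength α) {w : V} {j : ℕ}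
    (hw : w ∈ T.LevF j) : T.childrenF w ⊆ T.LevF (j + 1) := by
  intro u hu
  rw [mem_childrenF] at hu
  rw [mem_LevF] at *
  rw [hgt_step hT hu, hw]; push_cast; ring

lemma LevF_succ (hT : T.PerfectUnitLength α) (j : ℕ) :
    T.LevF (j + 1) = (T.LevF j).biUnion T.childrenF := by
  ext v
  constructor
  · intro hv
    rw [mem_LevF] at hv
    have hvroot : v ≠ T.root := by
      intro h
      rw [h, T.hgt_root] at hv
      have : ((j : ℝ) + 1) ≠ 0 := by positivity
      push_cast at hv
      exact this hv.symm
    obtain ⟨u, hu⟩ := Option.isSome_iff_exists.mp (T.parent_isSome v hvroot)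
    have h1 := hgt_step hT hu
    refine Finset.mem_biUnion.2 ⟨u, ?_, mem_childrenF.2 hu⟩
    rw [mem_LevF]
    push_cast at hv
    linarith
  · intro hv
    obtain ⟨u, hu, hcu⟩ := Finset.mem_biUnion.1 hv
    exact childrenF_subset_LevF hT hu hcu

lemma childrenF_disjoint {v w : V} (h : v ≠ w) :
    Disjoint (T.childrenF v) (T.childrenF w) := by
  rw [Finset.disjoint_left]
  intro u hu hu'
  rw [mem_childrenF] at hu hu'
  rw [hu] at hu'
  exact h (Option.some_injective _ hu')

lemma card_childrenF (hT : T.PerfectUnitLength α) {w : V} {j : ℕ}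
    (hw : w ∈ T.LevF j) (hj : j < α) : (T.childrenF w).card = 2 := by
  rw [mem_LevF] at hw
  have hnl : ¬ T.IsLeaf w := by
    rw [isLeaf_iff_hgt hT, hw]
    intro h
    have : j = α := by exact_mod_cast h
    omega
  have hb := hT.1 w hnl
  have : {u | T.parent u = some w} = ↑(T.childrenF w) := by
    ext u; simp [mem_childrenF]
  rw [this, Set.ncard_coe_finset] at hb
  exact hb

lemma card_LevF (hT : T.PerfectUnitLength α) : ∀ j ≤ α, (T.LevF j).card = 2 ^ j := by
  intro j
  induction j with
  | zero => intro _; rw [LevF_zero hT]; simp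
  | succ j ih =>
      intro hj
      rw [LevF_succ hT j]
      rw [Finset.card_biUnion (fun v hv w hw hvw => childrenF_disjoint hvw)]
      rw [Finset.sum_congr rfl (fun w hw => card_childrenF hT hw (by omega))]
      rw [Finset.sum_const, ih (by omega)]
      ring

lemma exists_anc_at (hT : T.PerfectUnitLength α) (x : V) :
    ∀ j : ℕ, (j : ℝ) ≤ T.hgt x → ∃ u, T.anc u x ∧ T.hgt u = (j : ℝ) := by
  refine root_ind (T := T) (fun x => ∀ j : ℕ, (j : ℝ) ≤ T.hgt x → ∃ u, T.anc u x ∧ T.hgt u = (j : ℝ))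
    ?_ ?_ x
  · intro j hj
    rw [T.hgt_root] at hj
    have hj0 : j = 0 := by exact_mod_cast Nat.le_zero.mp (by exact_mod_cast hj)
    exact ⟨T.root, anc_refl _, by rw [hj0, T.hgt_root]; simp⟩
  · intro v u h ih j hj
    have hs := hgt_step hT h
    obtain ⟨m, hm⟩ := hgt_nat hT u
    have hjm : j ≤ m + 1 := by
      rw [hs, hm] at hj
      exact_mod_cast hj
    rcases (by omega : j ≤ m ∨ j = m + 1) with hle | rfl
    · obtain ⟨w, hw1, hw2⟩ := ih j (by rw [hm]; exact_mod_cast hle)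
      exact ⟨w, anc_trans hw1 (anc_of_parent h), hw2⟩
    · exact ⟨v, anc_refl v, by rw [hs, hm]; push_cast; ring⟩

end PhyloTree
namespace PhyloTree

open Finset

variable {V : Type} [Fintype V] [DecidableEq V] {T : PhyloTree V} {α : ℕ}

lemma mem_lbF {x v : V} : x ∈ T.lbF v ↔ T.IsLeaf x ∧ T.anc v x := by simp [lbF]

lemma mem_leavesF {x : V} : x ∈ T.leavesF ↔ T.IsLeaf x := by simp [leavesF]

lemma lbF_subset_leavesF (v : V) : T.lbF v ⊆ T.leavesF := by
  intro x hx; rw [mem_leavesF]; exact (mem_lbF.1 hx).1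

lemma lbF_leaf (hT : T.PerfectUnitLength α) {v : V} (h : T.IsLeaf v) : T.lbF v = {v} := by
  ext x
  rw [mem_lbF, Finset.mem_singleton]
  constructor
  · rintro ⟨hx, hanc⟩
    exact (eq_of_anc_hgt hT hanc (by rw [hT.2.2 v h, hT.2.2 x hx])).symm
  · rintro rfl; exact ⟨h, anc_refl _⟩

lemma lbF_disjoint (hT : T.PerfectUnitLength α) {v w : V} (hh : T.hgt v = T.hgt w)
    (hne : v ≠ w) : Disjoint (T.lbF v) (T.lbF w) := by
  rw [Finset.disjoint_left]
  intro x hx hx'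
  rw [mem_lbF] at hx hx'
  exact hne (level_anc_unique hT hx.2 hx'.2 hh)

lemma lbF_nonempty (hT : T.PerfectUnitLength α) (v : V) : (T.lbF v).Nonempty := by
  obtain ⟨x, hx, hanc⟩ := exists_leaf_below hT v
  exact ⟨x, mem_lbF.2 ⟨hx, hanc⟩⟩

lemma card_lbF (hT : T.PerfectUnitLength α) :
    ∀ d j (v : V), j + d = α → T.hgt v = (j : ℝ) → (T.lbF v).card = 2 ^ d := by
  intro d
  induction d with
  | zero =>
      intro j v hj hv
      have hjα : j = α := by omega
      have hl : T.IsLeaf v := isLeaf_of_hgt hT (by rw [hv, hjα])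
      rw [lbF_leaf hT hl]; simp
  | succ d ih =>
      intro j v hj hv
      have hjα : j < α := by omega
      have hvlev : v ∈ T.LevF j := mem_LevF.2 hv
      have h2 := card_childrenF hT hvlev hjα
      obtain ⟨c₁, c₂, hne, hch⟩ := Finset.card_eq_two.1 h2
      have hc₁ : T.parent c₁ = some v := by
        have : c₁ ∈ T.childrenF v := by rw [hch]; simp
        exact mem_childrenF.1 this
      have hc₂ : T.parent c₂ = some v := by
        have : c₂ ∈ T.childrenF v := by rw [hch]; simp
        exact mem_childrenF.1 this
      have hg₁ : T.hgt c₁ = ((j + 1 : ℕ) : ℝ) := by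
        rw [hgt_step hT hc₁, hv]; push_cast; ring
      have hg₂ : T.hgt c₂ = ((j + 1 : ℕ) : ℝ) := by
        rw [hgt_step hT hc₂, hv]; push_cast; ring
      have hnl : ¬ T.IsLeaf v := by
        rw [isLeaf_iff_hgt hT, hv]
        intro h
        have : j = α := by exact_mod_cast h
        omega
      have hu : T.lbF v = T.lbF c₁ ∪ T.lbF c₂ := by
        ext x
        simp only [Finset.mem_union, mem_lbF]
        constructor
        · rintro ⟨hx, hanc⟩
          rcases Relation.ReflTransGen.cases_tail hanc with h | ⟨c, hxc, hcv⟩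
          · exact absurd (h ▸ hx) hnl
          · have : c ∈ T.childrenF v := mem_childrenF.2 hcv
            rw [hch] at this
            rcases Finset.mem_insert.1 this with rfl | h'
            · exact Or.inl ⟨hx, hxc⟩
            · rw [Finset.mem_singleton] at h'
              exact Or.inr ⟨hx, h' ▸ hxc⟩
        · rintro (⟨hx, h⟩ | ⟨hx, h⟩)
          · exact ⟨hx, anc_trans (anc_of_parent hc₁) h⟩
          · exact ⟨hx, anc_trans (anc_of_parent hc₂) h⟩
      have hdisj : Disjoint (T.lbF c₁) (T.lbF c₂) :=
        lbF_disjoint hT (by rw [hg₁, hg₂]) hne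
      rw [hu, Finset.card_union_of_disjoint hdisj,
        ih (j + 1) c₁ (by omega) hg₁, ih (j + 1) c₂ (by omega) hg₂]
      ring

lemma card_lbF' (hT : T.PerfectUnitLength α) {v : V} {j : ℕ} (hv : T.hgt v = (j : ℝ))
    (hj : j ≤ α) : (T.lbF v).card = 2 ^ (α - j) :=
  card_lbF hT (α - j) j v (by omega) hv

lemma mem_covF {v : V} {j : ℕ} {A : Finset V} :
    v ∈ T.covF j A ↔ T.hgt v = (j : ℝ) ∧ ∃ x ∈ A, T.anc v x := by
  simp [covF, LevF, Finset.mem_filter]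

lemma covF_subset_LevF {j : ℕ} {A : Finset V} : T.covF j A ⊆ T.LevF j :=
  Finset.filter_subset _ _

lemma covF_mono {j : ℕ} {A B : Finset V} (h : A ⊆ B) : T.covF j A ⊆ T.covF j B := by
  intro v hv
  rw [mem_covF] at hv ⊢
  obtain ⟨h1, x, hx, h2⟩ := hv
  exact ⟨h1, x, h hx, h2⟩

lemma card_covF_le_pow (hT : T.PerfectUnitLength α) {j : ℕ} (hj : j ≤ α) (A : Finset V) :
    (T.covF j A).card ≤ 2 ^ j := by
  calc (T.covF j A).card ≤ (T.LevF j).card := Finset.card_le_card covF_subset_LevF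
    _ = 2 ^ j := card_LevF hT j hj

lemma card_covF_le_cardA (hT : T.PerfectUnitLength α) (j : ℕ) (A : Finset V) :
    (T.covF j A).card ≤ A.card := by
  classical
  set f := fun v => if h : ∃ x ∈ A, T.anc v x then h.choose else v with hf
  have hfA : ∀ v ∈ T.covF j A, f v ∈ A ∧ T.anc v (f v) := by
    intro v hv
    have h := (mem_covF.1 hv).2
    simp only [hf, dif_pos h]
    exact ⟨h.choose_spec.1, h.choose_spec.2⟩
  apply Finset.card_le_card_of_injOn f (fun v hv => (hfA v hv).1)
  intro v hv w hw hfvw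
  rw [Finset.mem_coe] at hv hw
  exact level_anc_unique hT ((hfA v hv).2) (hfvw ▸ (hfA w hw).2)
    (by rw [(mem_covF.1 hv).1, (mem_covF.1 hw).1])

lemma covF_disjoint {j j' : ℕ} (h : j ≠ j') (A B : Finset V) :
    Disjoint (T.covF j A) (T.covF j' B) := by
  rw [Finset.disjoint_left]
  intro v hv hv'
  have h1 := (mem_covF.1 hv).1
  have h2 := (mem_covF.1 hv').1
  rw [h1] at h2
  exact h (by exact_mod_cast h2)

lemma PD_finset (hT : T.PerfectUnitLength α) {A : Finset V} (hA : A ⊆ T.leavesF) :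
    T.PD ↑A = ((∑ j ∈ Finset.Icc 1 α, (T.covF j A).card : ℕ) : ℝ) := by
  have h1 : ∀ v : V,
      (if v ≠ T.root ∧ ∃ x ∈ (↑A : Set V), T.IsLeaf x ∧ T.anc v x then T.len v else 0)
      = (if v ∈ (Finset.Icc 1 α).biUnion (fun j => T.covF j A) then (1 : ℝ) else 0) := by
    intro v
    by_cases hc : v ≠ T.root ∧ ∃ x ∈ (↑A : Set V), T.IsLeaf x ∧ T.anc v x
    · rw [if_pos hc, hT.2.1 v hc.1, if_pos ?_]
      obtain ⟨m, hm⟩ := hgt_nat hT v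
      have hm0 : m ≠ 0 := by
        intro h
        exact hc.1 (eq_root_of_hgt_zero hT (by rw [hm, h]; simp))
      have hmα : m ≤ α := by
        have := hgt_le_alpha hT v
        rw [hm] at this
        exact_mod_cast this
      obtain ⟨x, hxA, _, hanc⟩ := hc.2
      exact Finset.mem_biUnion.2 ⟨m, Finset.mem_Icc.2 ⟨by omega, hmα⟩,
        mem_covF.2 ⟨hm, x, by exact_mod_cast hxA, hanc⟩⟩
    · rw [if_neg hc, if_neg ?_]
      intro hmem
      obtain ⟨j, hj, hcov⟩ := Finset.mem_biUnion.1 hmem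
      obtain ⟨hhg, x, hxA, hanc⟩ := mem_covF.1 hcov
      have hj1 := (Finset.mem_Icc.1 hj).1
      refine hc ⟨?_, x, by exact_mod_cast hxA, mem_leavesF.1 (hA hxA), hanc⟩
      intro hroot
      rw [hroot, T.hgt_root] at hhg
      have : j = 0 := by exact_mod_cast hhg.symm
      omega
  have h2 : (∑ v : V, if v ≠ T.root ∧ ∃ x ∈ (↑A : Set V), T.IsLeaf x ∧ T.anc v x
      then T.len v else 0) = ((∑ j ∈ Finset.Icc 1 α, (T.covF j A).card : ℕ) : ℝ) := by
    refine Eq.trans (Finset.sum_congr rfl fun v _ => h1 v) ?_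
    rw [Finset.sum_boole]
    have h3 : Finset.univ.filter (fun v => v ∈ (Finset.Icc 1 α).biUnion (fun j => T.covF j A))
        = (Finset.Icc 1 α).biUnion (fun j => T.covF j A) := by
      ext v; simp
    rw [h3, Finset.card_biUnion (fun j _ j' _ hjj' => covF_disjoint hjj' A A)]
  unfold PD
  convert h2 using 2
  congr!

/-- the `maxPD` characterisation predicate -/
def goodF (T : PhyloTree V) (α k : ℕ) (A : Finset V) : Prop :=
  A ⊆ T.leavesF ∧ A.card = k ∧ ∀ j, 1 ≤ j → j ≤ α → (T.covF j A).card = min (2 ^ j) k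

lemma PD_le_minsum (hT : T.PerfectUnitLength α) {A : Finset V} (hA : A ⊆ T.leavesF)
    {k : ℕ} (hk : A.card = k) :
    (∑ j ∈ Finset.Icc 1 α, (T.covF j A).card) ≤ ∑ j ∈ Finset.Icc 1 α, min (2 ^ j) k := by
  refine Finset.sum_le_sum (fun j hj => ?_)
  have hjα := (Finset.mem_Icc.1 hj).2
  exact le_min (card_covF_le_pow hT hjα A) (hk ▸ card_covF_le_cardA hT j A)

lemma PD_good (hT : T.PerfectUnitLength α) {A : Finset V} {k : ℕ} (hA : T.goodF α k A) :
    T.PD ↑A = ((∑ j ∈ Finset.Icc 1 α, min (2 ^ j) k : ℕ) : ℝ) := by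
  rw [PD_finset hT hA.1]
  congr 1
  refine Finset.sum_congr rfl (fun j hj => ?_)
  rw [Finset.mem_Icc] at hj
  exact hA.2.2 j hj.1 hj.2

end PhyloTree
namespace PhyloTree

open Finset

variable {V : Type} [Fintype V] [DecidableEq V] {T : PhyloTree V} {α : ℕ}

lemma covF_empty (j : ℕ) : T.covF j (∅ : Finset V) = ∅ := by
  ext v; simp [mem_covF]

lemma goodF_exists (hT : T.PerfectUnitLength α) : ∀ k, k ≤ 2 ^ α → ∃ A, T.goodF α k A := by
  intro k
  induction k with
  | zero =>
      intro _
      refine ⟨∅, Finset.empty_subset _, Finset.card_empty, fun j _ _ => ?_⟩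
      rw [covF_empty]; simp
  | succ k ih =>
      intro hk1
      obtain ⟨A, hA⟩ := ih (le_trans (Nat.le_succ k) hk1)
      have hex : ∃ j, k + 1 ≤ 2 ^ j := ⟨α, hk1⟩
      set t := Nat.find hex with ht
      have htle : k + 1 ≤ 2 ^ t := Nat.find_spec hex
      have htmin : ∀ j, j < t → 2 ^ j ≤ k := by
        intro j hj
        have := Nat.find_min hex hj
        omega
      have htα : t ≤ α := Nat.find_le hk1
      have hlt : (T.covF t A).card < (T.LevF t).card := by
        rw [card_LevF hT t htα]
        rcases Nat.eq_zero_or_pos k with rfl | hk0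
        · have hA0 : A = ∅ := Finset.card_eq_zero.1 hA.2.1
          rw [hA0, covF_empty, Finset.card_empty]
          positivity
        · have ht1 : 1 ≤ t := by
            rcases Nat.eq_zero_or_pos t with ht0 | h
            · rw [ht0] at htle; norm_num at htle; omega
            · exact h
          have hc := hA.2.2 t ht1 htα
          rw [hc, min_eq_right (by omega)]
          omega
      obtain ⟨v, hvLev, hvcov⟩ : ∃ v ∈ T.LevF t, v ∉ T.covF t A := by
        by_contra h
        push_neg at h
        have := Finset.card_le_card h
        omega
      obtain ⟨x, hxlb⟩ := lbF_nonempty hT v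
      rw [mem_lbF] at hxlb
      have hvt : T.hgt v = (t : ℝ) := mem_LevF.1 hvLev
      have hxA : x ∉ A := fun hxA => hvcov (mem_covF.2 ⟨hvt, x, hxA, hxlb.2⟩)
      refine ⟨insert x A, ?_, ?_, ?_⟩
      · intro y hy
        rcases Finset.mem_insert.1 hy with rfl | hy
        · exact mem_leavesF.2 hxlb.1
        · exact hA.1 hy
      · rw [Finset.card_insert_of_notMem hxA, hA.2.1]
      · intro j hj1 hjα
        by_cases hjt : t ≤ j
        · have hxj : (j : ℝ) ≤ T.hgt x := by
            rw [hT.2.2 x hxlb.1]; exact_mod_cast hjα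
          obtain ⟨u, hux, huj⟩ := exists_anc_at hT x j hxj
          have hvu : T.anc v u := by
            rcases anc_comparable hxlb.2 hux with h | h
            · exact h
            · have h1 : T.hgt u ≤ T.hgt v := hgt_le_of_anc hT h
              have h2 : j ≤ t := by rw [huj, hvt] at h1; exact_mod_cast h1
              have h3 : j = t := by omega
              have : u = v := eq_of_anc_hgt hT h (by rw [huj, hvt, h3])
              rw [this]; exact anc_refl v
          have hucov : u ∉ T.covF j A := by
            intro hu
            obtain ⟨_, a, haA, hua⟩ := mem_covF.1 hu
            exact hvcov (mem_covF.2 ⟨hvt, a, haA, anc_trans hvu hua⟩)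
          have hcov' : T.covF j (insert x A) = insert u (T.covF j A) := by
            ext w
            rw [mem_covF, Finset.mem_insert, mem_covF]
            constructor
            · rintro ⟨hw, y, hy, hwy⟩
              rcases Finset.mem_insert.1 hy with rfl | hy
              · exact Or.inl (level_anc_unique hT hwy hux (by rw [hw, huj]))
              · exact Or.inr ⟨hw, y, hy, hwy⟩
            · rintro (rfl | ⟨hw, y, hy, hwy⟩)
              · exact ⟨huj, x, Finset.mem_insert_self x A, hux⟩
              · exact ⟨hw, y, Finset.mem_insert_of_mem hy, hwy⟩
          rw [hcov', Finset.card_insert_of_notMem hucov, hA.2.2 j hj1 hjα]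
          have h2j : k + 1 ≤ 2 ^ j := le_trans htle (Nat.pow_le_pow_right (by norm_num) hjt)
          rw [min_eq_right (by omega), min_eq_right (by omega)]
        · push_neg at hjt
          have h2j : 2 ^ j ≤ k := htmin j hjt
          have hle : 2 ^ j ≤ (T.covF j (insert x A)).card := by
            calc 2 ^ j = (T.covF j A).card := by rw [hA.2.2 j hj1 hjα, min_eq_left h2j]
              _ ≤ _ := Finset.card_le_card (covF_mono (Finset.subset_insert x A))
          have hge := card_covF_le_pow hT hjα (insert x A)
          rw [min_eq_left (by omega)]
          omega

lemma PD_any_le (hT : T.PerfectUnitLength α) {Y : Set V} (hY : Y ⊆ T.leaves) {k : ℕ}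
    (hYk : Y.ncard = k) :
    T.PD Y ≤ ((∑ j ∈ Finset.Icc 1 α, min (2 ^ j) k : ℕ) : ℝ) := by
  have hYf : Y.Finite := Y.toFinite
  set B := hYf.toFinset with hB
  have hBY : (↑B : Set V) = Y := hYf.coe_toFinset
  have hBl : B ⊆ T.leavesF := by
    intro y hy
    rw [mem_leavesF]
    have : y ∈ Y := by rw [← hBY]; exact_mod_cast hy
    exact hY this
  have hBk : B.card = k := by
    rw [← hYk, ← hBY, Set.ncard_coe_finset]
  rw [← hBY, PD_finset hT hBl]
  exact_mod_cast PD_le_minsum hT hBl hBk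

lemma isMaxPD_iff (hT : T.PerfectUnitLength α) {k : ℕ} (hk : k ≤ 2 ^ α) (A : Set V) :
    T.IsMaxPD k A ↔ ∃ B : Finset V, T.goodF α k B ∧ A = ↑B := by
  obtain ⟨B₀, hB₀⟩ := goodF_exists hT k hk
  have hB₀leaves : (↑B₀ : Set V) ⊆ T.leaves := fun x hx => mem_leavesF.1 (hB₀.1 hx)
  have hB₀k : (↑B₀ : Set V).ncard = k := by rw [Set.ncard_coe_finset, hB₀.2.1]
  constructor
  · rintro ⟨hAl, hAk, hAmax⟩
    have hAf : A.Finite := A.toFinite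
    set B := hAf.toFinset with hBdef
    have hBA : (↑B : Set V) = A := hAf.coe_toFinset
    have hBl : B ⊆ T.leavesF := by
      intro y hy
      rw [mem_leavesF]
      exact hAl (by rw [← hBA]; exact_mod_cast hy)
    have hBk : B.card = k := by rw [← hAk, ← hBA, Set.ncard_coe_finset]
    refine ⟨B, ⟨hBl, hBk, ?_⟩, hBA.symm⟩
    have hge : T.PD A ≥ T.PD ↑B₀ := hAmax ↑B₀ hB₀leaves hB₀k
    rw [PD_good hT hB₀, ← hBA, PD_finset hT hBl] at hge
    have hge' : (∑ j ∈ Finset.Icc 1 α, min (2 ^ j) k) ≤ ∑ j ∈ Finset.Icc 1 α, (T.covF j B).card := by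
      exact_mod_cast hge
    have hle' := PD_le_minsum hT hBl hBk
    have heq : ∑ j ∈ Finset.Icc 1 α, (T.covF j B).card = ∑ j ∈ Finset.Icc 1 α, min (2 ^ j) k := le_antisymm hle' hge'
    intro j hj1 hjα
    have hper : ∀ i ∈ Finset.Icc 1 α, (T.covF i B).card ≤ min (2 ^ i) k := by
      intro i hi
      rw [Finset.mem_Icc] at hi
      exact le_min (card_covF_le_pow hT hi.2 B) (hBk ▸ card_covF_le_cardA hT i B)
    have := (Finset.sum_eq_sum_iff_of_le hper).1 heq j (Finset.mem_Icc.2 ⟨hj1, hjα⟩)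
    exact this
  · rintro ⟨B, hB, rfl⟩
    refine ⟨fun x hx => mem_leavesF.1 (hB.1 hx), by rw [Set.ncard_coe_finset, hB.2.1], ?_⟩
    intro Y hY hYk
    rw [PD_good hT hB]
    exact PD_any_le hT hY hYk

lemma m_eq_card (hT : T.PerfectUnitLength α) {k : ℕ} (hk : k ≤ 2 ^ α) :
    T.m k = (Finset.univ.filter (fun B : Finset V => T.goodF α k B)).card := by
  unfold m
  have hset : {A : Set V | T.IsMaxPD k A}
      = (fun B : Finset V => (↑B : Set V)) ''
        ↑(Finset.univ.filter (fun B : Finset V => T.goodF α k B)) := by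
    ext A
    simp only [Set.mem_setOf_eq, Set.mem_image, Finset.mem_coe, Finset.mem_filter,
      Finset.mem_univ, true_and]
    rw [isMaxPD_iff hT hk]
    constructor
    · rintro ⟨B, hB, rfl⟩; exact ⟨B, hB, rfl⟩
    · rintro ⟨B, hB, rfl⟩; exact ⟨B, hB, rfl⟩
  rw [hset, Set.ncard_image_of_injective _ (fun B C h => Finset.coe_injective h),
    Set.ncard_coe_finset]

end PhyloTree
namespace PhyloTree

open Finset

/-- counting sets that pick exactly one element from each block of a disjoint family -/
lemma card_selectors {β : Type} [DecidableEq β] :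
    ∀ (I : Finset β) (O : β → Finset β),
    (∀ i ∈ I, ∀ j ∈ I, i ≠ j → Disjoint (O i) (O j)) →
    ((I.biUnion O).powerset.filter (fun A => ∀ i ∈ I, (A ∩ O i).card = 1)).card
      = ∏ i ∈ I, (O i).card := by
  intro I
  induction I using Finset.induction_on with
  | empty => intro O _; simp
  | @insert i I hiI ih =>
      intro O hdisj
      have hdisjI : ∀ a ∈ I, ∀ b ∈ I, a ≠ b → Disjoint (O a) (O b) :=
        fun a ha b hb => hdisj a (mem_insert_of_mem ha) b (mem_insert_of_mem hb)
      have hOiI : ∀ j ∈ I, Disjoint (O i) (O j) :=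
        fun j hj => hdisj i (mem_insert_self i I) j (mem_insert_of_mem hj)
          (fun h => hiI (h ▸ hj))
      set U := I.biUnion O with hU
      set rec := (U.powerset.filter (fun A => ∀ j ∈ I, (A ∩ O j).card = 1)) with hrec
      have hBOi : ∀ B ∈ rec, B ∩ O i = ∅ := by
        intro B hB
        rw [hrec, Finset.mem_filter, Finset.mem_powerset] at hB
        refine Finset.eq_empty_of_forall_notMem ?_
        intro b hb
        rw [Finset.mem_inter] at hb
        obtain ⟨j, hj, hbj⟩ := Finset.mem_biUnion.1 (hB.1 hb.1)
        exact (Finset.disjoint_left.1 (hOiI j hj)) hb.2 hbj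
      have hAOi : ∀ x, x ∈ O i → ∀ B, B ∈ rec → (insert x B) ∩ O i = {x} := by
        intro x hx B hB
        ext a
        simp only [Finset.mem_inter, Finset.mem_insert, Finset.mem_singleton]
        constructor
        · rintro ⟨(rfl | haB), haO⟩
          · rfl
          · exact absurd (Finset.mem_inter.2 ⟨haB, haO⟩) (by rw [hBOi B hB]; simp)
        · rintro rfl; exact ⟨Or.inl rfl, hx⟩
      have hmain : ((insert i I).biUnion O).powerset.filter
          (fun A => ∀ j ∈ insert i I, (A ∩ O j).card = 1)
          = (O i).biUnion (fun x => rec.image (insert x)) := by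
        ext A
        simp only [Finset.mem_filter, Finset.mem_powerset, Finset.mem_biUnion, Finset.mem_image]
        constructor
        · rintro ⟨hAsub, hAcond⟩
          have h1 : (A ∩ O i).card = 1 := hAcond i (Finset.mem_insert_self i I)
          obtain ⟨x, hx⟩ := Finset.card_eq_one.1 h1
          have hxOi : x ∈ O i := by
            have : x ∈ A ∩ O i := by rw [hx]; exact Finset.mem_singleton_self x
            exact (Finset.mem_inter.1 this).2
          have hxA : x ∈ A := by
            have : x ∈ A ∩ O i := by rw [hx]; exact Finset.mem_singleton_self x
            exact (Finset.mem_inter.1 this).1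
          have hBmem : A \ O i ∈ rec := by
            rw [hrec, Finset.mem_filter, Finset.mem_powerset]
            constructor
            · intro a ha
              rw [Finset.mem_sdiff] at ha
              have := hAsub ha.1
              rw [Finset.biUnion_insert, Finset.mem_union] at this
              rcases this with h | h
              · exact absurd h ha.2
              · exact h
            · intro j hj
              have heq : (A \ O i) ∩ O j = A ∩ O j := by
                ext a
                simp only [Finset.mem_inter, Finset.mem_sdiff]
                constructor
                · rintro ⟨⟨ha1, _⟩, ha2⟩; exact ⟨ha1, ha2⟩
                · rintro ⟨ha1, ha2⟩
                  exact ⟨⟨ha1, fun hOi => (Finset.disjoint_left.1 (hOiI j hj)) hOi ha2⟩, ha2⟩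
              rw [heq]
              exact hAcond j (Finset.mem_insert_of_mem hj)
          refine ⟨x, hxOi, A \ O i, hBmem, ?_⟩
          ext a
          simp only [Finset.mem_insert, Finset.mem_sdiff]
          constructor
          · rintro (rfl | ⟨ha, _⟩)
            · exact hxA
            · exact ha
          · intro ha
            by_cases haOi : a ∈ O i
            · left
              have : a ∈ A ∩ O i := Finset.mem_inter.2 ⟨ha, haOi⟩
              rw [hx, Finset.mem_singleton] at this
              exact this
            · exact Or.inr ⟨ha, haOi⟩
        · rintro ⟨x, hxOi, B, hB, rfl⟩
          have hB' := hB
          rw [hrec, Finset.mem_filter, Finset.mem_powerset] at hB'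
          constructor
          · intro a ha
            rcases Finset.mem_insert.1 ha with rfl | haB
            · exact Finset.mem_biUnion.2 ⟨i, Finset.mem_insert_self i I, hxOi⟩
            · obtain ⟨j, hj, h⟩ := Finset.mem_biUnion.1 (hB'.1 haB)
              exact Finset.mem_biUnion.2 ⟨j, Finset.mem_insert_of_mem hj, h⟩
          · intro j hj
            rcases Finset.mem_insert.1 hj with rfl | hjI
            · rw [hAOi x hxOi B hB]
              simp
            · have hxOj : x ∉ O j := fun h => (Finset.disjoint_left.1 (hOiI j hjI)) hxOi h
              have heq : (insert x B) ∩ O j = B ∩ O j := by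
                ext a
                simp only [Finset.mem_inter, Finset.mem_insert]
                constructor
                · rintro ⟨(rfl | haB), haO⟩
                  · exact absurd haO hxOj
                  · exact ⟨haB, haO⟩
                · rintro ⟨haB, haO⟩; exact ⟨Or.inr haB, haO⟩
              rw [heq]
              exact hB'.2 j hjI
      have hdisjimg : ∀ x ∈ O i, ∀ y ∈ O i, x ≠ y →
          Disjoint (rec.image (insert x)) (rec.image (insert y)) := by
        intro x hx y hy hxy
        rw [Finset.disjoint_left]
        rintro A hAx hAy
        obtain ⟨B, hB, rfl⟩ := Finset.mem_image.1 hAx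
        obtain ⟨C, hC, hCA⟩ := Finset.mem_image.1 hAy
        have h1 := hAOi x hx B hB
        have h2 := hAOi y hy C hC
        rw [hCA, h1] at h2
        exact hxy (Finset.singleton_injective h2)
      rw [hmain, Finset.card_biUnion hdisjimg]
      have himg : ∀ x ∈ O i, (rec.image (insert x)).card = rec.card := by
        intro x hx
        apply Finset.card_image_of_injOn
        intro B hB C hC hBC
        rw [Finset.mem_coe] at hB hC
        have hBx : x ∉ B := by
          intro h
          have h2 := Finset.mem_inter.2 ⟨h, hx⟩
          rw [hBOi B hB] at h2
          simp at h2
        have hCx : x ∉ C := by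
          intro h
          have h2 := Finset.mem_inter.2 ⟨h, hx⟩
          rw [hBOi C hC] at h2
          simp at h2
        have : B = (insert x B).erase x := by rw [Finset.erase_insert hBx]
        rw [this, hBC, Finset.erase_insert hCx]
      rw [Finset.sum_congr rfl himg, Finset.sum_const, ih O hdisjI, Finset.prod_insert hiI]
      rw [smul_eq_mul]

end PhyloTree
namespace PhyloTree

open Finset

variable {V : Type} [Fintype V] [DecidableEq V] {T : PhyloTree V} {α : ℕ}

lemma parent_mem_prev_level (hT : T.PerfectUnitLength α) {t : ℕ} (ht1 : 1 ≤ t) {s : V}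
    (hs : s ∈ T.LevF t) : ∃ w ∈ T.LevF (t - 1), T.parent s = some w := by
  have hhg := mem_LevF.1 hs
  have hsroot : s ≠ T.root := by
    intro h
    rw [h, T.hgt_root] at hhg
    have : t = 0 := by exact_mod_cast hhg.symm
    omega
  obtain ⟨w, hw⟩ := Option.isSome_iff_exists.mp (T.parent_isSome s hsroot)
  refine ⟨w, mem_LevF.2 ?_, hw⟩
  have := hgt_step hT hw
  rw [hhg] at this
  rw [Nat.cast_sub ht1]
  push_cast
  linarith

lemma card_SS (hT : T.PerfectUnitLength α) {t : ℕ} (ht1 : 1 ≤ t) (htα : t ≤ α) {k : ℕ}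
    (hk1 : 2 ^ (t - 1) ≤ k) (hk2 : k ≤ 2 ^ t) :
    ((T.LevF t).powerset.filter (fun S => S.card = k ∧
        ∀ w ∈ T.LevF (t - 1), ∃ s ∈ S, T.parent s = some w)).card
      = (2 ^ (t - 1)).choose (k - 2 ^ (t - 1)) * 2 ^ (2 ^ (t - 1) - (k - 2 ^ (t - 1))) := by
  set p := 2 ^ (t - 1) with hp
  set P := T.LevF (t - 1) with hP
  have hPcard : P.card = p := card_LevF hT (t - 1) (by omega)
  have htt : t - 1 + 1 = t := by omega
  have h2t : 2 * p = 2 ^ t := by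
    rw [hp, ← pow_succ', htt]
  clear_value p
  have hchsub : ∀ w ∈ P, T.childrenF w ⊆ T.LevF t := by
    intro w hw
    have := childrenF_subset_LevF hT (j := t - 1) hw
    rwa [htt] at this
  have hch2 : ∀ w ∈ P, (T.childrenF w).card = 2 :=
    fun w hw => card_childrenF hT hw (by omega)
  -- the sets appearing in the decomposition
  set selset := fun D : Finset V =>
    (((P \ D).biUnion T.childrenF).powerset.filter
      (fun E => ∀ w ∈ P \ D, (E ∩ T.childrenF w).card = 1)) with hselset
  -- intersections of a built set with children blocks
  have hblock : ∀ (D E : Finset V), D ⊆ P → E ⊆ (P \ D).biUnion T.childrenF → ∀ w ∈ P,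
      ((w ∈ D → (D.biUnion T.childrenF ∪ E) ∩ T.childrenF w = T.childrenF w) ∧
       (w ∉ D → (D.biUnion T.childrenF ∪ E) ∩ T.childrenF w = E ∩ T.childrenF w)) := by
    intro D E hD hE w hw
    constructor
    · intro hwD
      apply Finset.Subset.antisymm (Finset.inter_subset_right)
      intro a ha
      exact Finset.mem_inter.2 ⟨Finset.mem_union_left _ (Finset.mem_biUnion.2 ⟨w, hwD, ha⟩), ha⟩
    · intro hwD
      ext a
      simp only [Finset.mem_inter, Finset.mem_union]
      constructor
      · rintro ⟨h1 | h1, h2⟩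
        · obtain ⟨w', hw', haw'⟩ := Finset.mem_biUnion.1 h1
          have : w' = w := by
            have p1 : T.parent a = some w' := mem_childrenF.1 haw'
            have p2 : T.parent a = some w := mem_childrenF.1 h2
            rw [p1] at p2
            exact Option.some_injective _ p2
          exact absurd (this ▸ hw') hwD
        · exact ⟨h1, h2⟩
      · rintro ⟨h1, h2⟩
        exact ⟨Or.inr h1, h2⟩
  have hEsub : ∀ (D : Finset V), ∀ E ∈ selset D, E ⊆ (P \ D).biUnion T.childrenF := by
    intro D E hE
    rw [hselset, Finset.mem_filter, Finset.mem_powerset] at hE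
    exact hE.1
  -- main decomposition
  have hmain : (T.LevF t).powerset.filter (fun S => S.card = k ∧
        ∀ w ∈ P, ∃ s ∈ S, T.parent s = some w)
      = (P.powersetCard (k - p)).biUnion
          (fun D => (selset D).image (fun E => D.biUnion T.childrenF ∪ E)) := by
    ext S
    simp only [Finset.mem_filter, Finset.mem_powerset, Finset.mem_biUnion,
      Finset.mem_image, Finset.mem_powersetCard]
    constructor
    · rintro ⟨hSsub, hSk, hScov⟩
      -- each element has a parent in P, blocks decompose S
      have hSblocks : S = P.biUnion (fun w => S ∩ T.childrenF w) := by
        ext s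
        simp only [Finset.mem_biUnion, Finset.mem_inter]
        constructor
        · intro hs
          obtain ⟨w, hw, hws⟩ := parent_mem_prev_level hT ht1 (hSsub hs)
          exact ⟨w, hw, hs, mem_childrenF.2 hws⟩
        · rintro ⟨w, hw, hs, _⟩; exact hs
      have hblockdisj : ∀ w ∈ P, ∀ w' ∈ P, w ≠ w' →
          Disjoint (S ∩ T.childrenF w) (S ∩ T.childrenF w') := by
        intro w _ w' _ hww'
        exact Finset.disjoint_of_subset_left Finset.inter_subset_right
          (Finset.disjoint_of_subset_right Finset.inter_subset_right
            (childrenF_disjoint hww'))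
      have hsum : ∑ w ∈ P, (S ∩ T.childrenF w).card = k := by
        rw [← hSk, ← Finset.card_biUnion hblockdisj, ← hSblocks]
      have hb1 : ∀ w ∈ P, 1 ≤ (S ∩ T.childrenF w).card := by
        intro w hw
        obtain ⟨s, hsS, hsw⟩ := hScov w hw
        exact Finset.card_pos.2 ⟨s, Finset.mem_inter.2 ⟨hsS, mem_childrenF.2 hsw⟩⟩
      have hb2 : ∀ w ∈ P, (S ∩ T.childrenF w).card ≤ 2 := by
        intro w hw
        calc (S ∩ T.childrenF w).card ≤ (T.childrenF w).card :=
              Finset.card_le_card Finset.inter_subset_right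
          _ = 2 := hch2 w hw
      set D := P.filter (fun w => (S ∩ T.childrenF w).card = 2) with hD
      have hDsub : D ⊆ P := Finset.filter_subset _ _
      have hsplit := Finset.sum_filter_add_sum_filter_not P
        (fun w => (S ∩ T.childrenF w).card = 2) (fun w => (S ∩ T.childrenF w).card)
      have hs1 : ∑ w ∈ D, (S ∩ T.childrenF w).card = 2 * D.card := by
        rw [Finset.sum_congr rfl (fun w hw => (Finset.mem_filter.1 hw).2)]
        rw [Finset.sum_const, smul_eq_mul, Nat.mul_comm]
      have hs2 : ∑ w ∈ P.filter (fun w => ¬ (S ∩ T.childrenF w).card = 2),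
          (S ∩ T.childrenF w).card
          = (P.filter (fun w => ¬ (S ∩ T.childrenF w).card = 2)).card := by
        rw [Finset.sum_congr rfl (fun w hw => ?_), Finset.sum_const, smul_eq_mul, Nat.mul_one]
        have hw1 := Finset.mem_filter.1 hw
        have := hb1 w hw1.1
        have := hb2 w hw1.1
        omega
      have hcards := Finset.card_filter_add_card_filter_not
        (s := P) (p := fun w => (S ∩ T.childrenF w).card = 2)
      have hDcard : D.card = k - p := by
        rw [hs1, hs2, hsum] at hsplit
        have h5 : D.card + (P.filter (fun w => ¬ (S ∩ T.childrenF w).card = 2)).card = p := by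
          rw [← hPcard]; exact hcards
        omega
      -- the full-block part is inside S
      have hfull : ∀ w ∈ D, T.childrenF w ⊆ S := by
        intro w hw
        have h2 := (Finset.mem_filter.1 hw).2
        have : S ∩ T.childrenF w = T.childrenF w :=
          Finset.eq_of_subset_of_card_le Finset.inter_subset_right
            (by rw [h2, hch2 w (hDsub hw)])
        intro a ha
        rw [← this] at ha
        exact (Finset.mem_inter.1 ha).1
      set E := S \ D.biUnion T.childrenF with hE
      have hEsub' : E ⊆ (P \ D).biUnion T.childrenF := by
        intro s hs
        rw [hE, Finset.mem_sdiff] at hs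
        obtain ⟨w, hw, hws⟩ := parent_mem_prev_level hT ht1 (hSsub hs.1)
        have hwD : w ∉ D := by
          intro hwD
          exact hs.2 (Finset.mem_biUnion.2 ⟨w, hwD, mem_childrenF.2 hws⟩)
        exact Finset.mem_biUnion.2 ⟨w, Finset.mem_sdiff.2 ⟨hw, hwD⟩, mem_childrenF.2 hws⟩
      have hEblock : ∀ w ∈ P \ D, E ∩ T.childrenF w = S ∩ T.childrenF w := by
        intro w hw
        rw [Finset.mem_sdiff] at hw
        ext a
        simp only [hE, Finset.mem_inter, Finset.mem_sdiff]
        constructor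
        · rintro ⟨⟨h1, _⟩, h2⟩; exact ⟨h1, h2⟩
        · rintro ⟨h1, h2⟩
          refine ⟨⟨h1, ?_⟩, h2⟩
          intro hmem
          obtain ⟨w', hw', haw'⟩ := Finset.mem_biUnion.1 hmem
          have : w' = w := by
            have p1 : T.parent a = some w' := mem_childrenF.1 haw'
            have p2 : T.parent a = some w := mem_childrenF.1 h2
            rw [p1] at p2
            exact Option.some_injective _ p2
          exact hw.2 (this ▸ hw')
      refine ⟨D, ⟨hDsub, hDcard⟩, E, ?_, ?_⟩
      · rw [hselset, Finset.mem_filter, Finset.mem_powerset]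
        refine ⟨hEsub', fun w hw => ?_⟩
        rw [hEblock w hw]
        have hw' := Finset.mem_sdiff.1 hw
        have := hb1 w hw'.1
        have := hb2 w hw'.1
        have hne : ¬ (S ∩ T.childrenF w).card = 2 := by
          intro h
          exact hw'.2 (Finset.mem_filter.2 ⟨hw'.1, h⟩)
        omega
      · -- D.biUnion childrenF ∪ E = S
        ext a
        simp only [Finset.mem_union, hE, Finset.mem_sdiff]
        constructor
        · rintro (h | ⟨h, _⟩)
          · obtain ⟨w, hw, haw⟩ := Finset.mem_biUnion.1 h
            exact hfull w hw haw
          · exact h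
        · intro ha
          by_cases hmem : a ∈ D.biUnion T.childrenF
          · exact Or.inl hmem
          · exact Or.inr ⟨ha, hmem⟩
    · rintro ⟨D, ⟨hDsub, hDcard⟩, E, hEmem, rfl⟩
      have hEsub' := hEsub D E hEmem
      rw [hselset, Finset.mem_filter, Finset.mem_powerset] at hEmem
      have hdisjDE : Disjoint (D.biUnion T.childrenF) E := by
        rw [Finset.disjoint_right]
        intro a haE haD
        obtain ⟨w, hw, haw⟩ := Finset.mem_biUnion.1 haD
        obtain ⟨w', hw', haw'⟩ := Finset.mem_biUnion.1 (hEsub' haE)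
        have : w' = w := by
          have p1 : T.parent a = some w' := mem_childrenF.1 haw'
          have p2 : T.parent a = some w := mem_childrenF.1 haw
          rw [p1] at p2
          exact Option.some_injective _ p2
        rw [this] at hw'
        exact (Finset.mem_sdiff.1 hw').2 hw
      have hcardD : (D.biUnion T.childrenF).card = 2 * (k - p) := by
        rw [Finset.card_biUnion (fun w hw w' hw' hww' => childrenF_disjoint hww')]
        rw [Finset.sum_congr rfl (fun w hw => hch2 w (hDsub hw)), Finset.sum_const,
          smul_eq_mul, hDcard, Nat.mul_comm]
      have hEdec : E = (P \ D).biUnion (fun w => E ∩ T.childrenF w) := by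
        ext a
        simp only [Finset.mem_biUnion, Finset.mem_inter]
        constructor
        · intro ha
          obtain ⟨w, hw, haw⟩ := Finset.mem_biUnion.1 (hEsub' ha)
          exact ⟨w, hw, ha, haw⟩
        · rintro ⟨w, hw, ha, _⟩; exact ha
      have hcardE : E.card = p - (k - p) := by
        conv_lhs => rw [hEdec]
        rw [Finset.card_biUnion]
        · rw [Finset.sum_congr rfl (fun w hw => hEmem.2 w hw), Finset.sum_const,
            smul_eq_mul, Nat.mul_one, Finset.card_sdiff_of_subset hDsub, hPcard, hDcard]
        · intro w hw w' hw' hww'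
          exact Finset.disjoint_of_subset_left Finset.inter_subset_right
            (Finset.disjoint_of_subset_right Finset.inter_subset_right
              (childrenF_disjoint hww'))
      refine ⟨?_, ?_, ?_⟩
      · intro a ha
        rcases Finset.mem_union.1 ha with h | h
        · obtain ⟨w, hw, haw⟩ := Finset.mem_biUnion.1 h
          exact hchsub w (hDsub hw) haw
        · obtain ⟨w, hw, haw⟩ := Finset.mem_biUnion.1 (hEsub' h)
          exact hchsub w ((Finset.mem_sdiff.1 hw).1) haw
      · rw [Finset.card_union_of_disjoint hdisjDE, hcardD, hcardE]
        omega
      · intro w hw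
        by_cases hwD : w ∈ D
        · have h2 := hch2 w hw
          have : (T.childrenF w).Nonempty := by
            rw [← Finset.card_pos, h2]; norm_num
          obtain ⟨s, hs⟩ := this
          exact ⟨s, Finset.mem_union.2 (Or.inl (Finset.mem_biUnion.2 ⟨w, hwD, hs⟩)),
            mem_childrenF.1 hs⟩
        · have h1 := hEmem.2 w (Finset.mem_sdiff.2 ⟨hw, hwD⟩)
          have : (E ∩ T.childrenF w).Nonempty := by
            rw [← Finset.card_pos, h1]; norm_num
          obtain ⟨s, hs⟩ := this
          rw [Finset.mem_inter] at hs
          exact ⟨s, Finset.mem_union.2 (Or.inr hs.1), mem_childrenF.1 hs.2⟩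
  rw [hmain]
  -- disjointness of the union over D, and injectivity of building from E
  have hrecover : ∀ (D : Finset V), D ⊆ P → ∀ E ∈ selset D, ∀ w ∈ P,
      ((D.biUnion T.childrenF ∪ E) ∩ T.childrenF w).card = 2 ↔ w ∈ D := by
    intro D hDsub E hEmem w hw
    have hEs := hEsub D E hEmem
    rw [hselset, Finset.mem_filter, Finset.mem_powerset] at hEmem
    constructor
    · intro hcard
      by_contra hwD
      rw [(hblock D E hDsub hEs w hw).2 hwD, hEmem.2 w (Finset.mem_sdiff.2 ⟨hw, hwD⟩)] at hcard
      omega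
    · intro hwD
      rw [(hblock D E hDsub hEs w hw).1 hwD]
      exact hch2 w hw
  rw [Finset.card_biUnion]
  · have himg : ∀ D ∈ P.powersetCard (k - p),
        ((selset D).image (fun E => D.biUnion T.childrenF ∪ E)).card = 2 ^ (p - (k - p)) := by
      intro D hD
      obtain ⟨hDsub, hDcard⟩ := Finset.mem_powersetCard.1 hD
      rw [Finset.card_image_of_injOn]
      · -- card selset D = ∏ = 2 ^ (p - (k-p))
        have := card_selectors (P \ D) T.childrenF
          (fun a _ b _ hab => childrenF_disjoint hab)
        simp only [hselset]
        have h9 : (((P \ D).biUnion T.childrenF).powerset.filter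
            (fun E => ∀ w ∈ P \ D, (E ∩ T.childrenF w).card = 1)).card
            = ∏ i ∈ P \ D, (T.childrenF i).card := by
          convert this using 3
        rw [h9, Finset.prod_congr rfl (fun w hw => hch2 w ((Finset.mem_sdiff.1 hw).1)),
          Finset.prod_const, Finset.card_sdiff_of_subset hDsub, hPcard, hDcard]
      · intro E hE E' hE' hEE'
        rw [Finset.mem_coe] at hE hE'
        have h1 : Disjoint (D.biUnion T.childrenF) E := by
          rw [Finset.disjoint_right]
          intro a haE haD
          obtain ⟨w, hw, haw⟩ := Finset.mem_biUnion.1 haD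
          obtain ⟨w', hw', haw'⟩ := Finset.mem_biUnion.1 (hEsub D E hE haE)
          have : w' = w := by
            have p1 : T.parent a = some w' := mem_childrenF.1 haw'
            have p2 : T.parent a = some w := mem_childrenF.1 haw
            rw [p1] at p2
            exact Option.some_injective _ p2
          rw [this] at hw'
          exact (Finset.mem_sdiff.1 hw').2 hw
        have h2 : Disjoint (D.biUnion T.childrenF) E' := by
          rw [Finset.disjoint_right]
          intro a haE haD
          obtain ⟨w, hw, haw⟩ := Finset.mem_biUnion.1 haD
          obtain ⟨w', hw', haw'⟩ := Finset.mem_biUnion.1 (hEsub D E' hE' haE)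
          have : w' = w := by
            have p1 : T.parent a = some w' := mem_childrenF.1 haw'
            have p2 : T.parent a = some w := mem_childrenF.1 haw
            rw [p1] at p2
            exact Option.some_injective _ p2
          rw [this] at hw'
          exact (Finset.mem_sdiff.1 hw').2 hw
        have hEE2 : D.biUnion T.childrenF ∪ E = D.biUnion T.childrenF ∪ E' := hEE'
        have : (D.biUnion T.childrenF ∪ E) \ (D.biUnion T.childrenF)
            = (D.biUnion T.childrenF ∪ E') \ (D.biUnion T.childrenF) := by rw [hEE2]
        rwa [Finset.union_sdiff_cancel_left h1, Finset.union_sdiff_cancel_left h2] at this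
    rw [Finset.sum_congr rfl himg, Finset.sum_const, smul_eq_mul,
      Finset.card_powersetCard, hPcard]
  · -- disjointness over D
    intro D hD D' hD' hDD'
    rw [Function.onFun, Finset.disjoint_left]
    rintro S hS hS'
    obtain ⟨E, hE, hSE⟩ := Finset.mem_image.1 hS
    obtain ⟨E', hE', hSE'⟩ := Finset.mem_image.1 hS'
    obtain ⟨hDsub, _⟩ := Finset.mem_powersetCard.1 hD
    obtain ⟨hDsub', _⟩ := Finset.mem_powersetCard.1 hD'
    apply hDD'
    ext w
    constructor
    · intro hw
      have hwP := hDsub hw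
      have := (hrecover D hDsub E hE w hwP).2 hw
      rw [hSE, ← hSE'] at this
      exact (hrecover D' hDsub' E' hE' w hwP).1 this
    · intro hw
      have hwP := hDsub' hw
      have := (hrecover D' hDsub' E' hE' w hwP).2 hw
      rw [hSE', ← hSE] at this
      exact (hrecover D hDsub E hE w hwP).1 this

end PhyloTree
namespace PhyloTree

open Finset

variable {V : Type} [Fintype V] [DecidableEq V] {T : PhyloTree V} {α : ℕ}

lemma all_one {S : Finset V} {f : V → ℕ} (h1 : ∀ s ∈ S, 1 ≤ f s)
    (h2 : ∑ s ∈ S, f s = S.card) : ∀ s ∈ S, f s = 1 := by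
  intro s hs
  have hrest : (S.erase s).card ≤ ∑ x ∈ S.erase s, f x := by
    calc (S.erase s).card = ∑ x ∈ S.erase s, 1 := by
          rw [Finset.sum_const, smul_eq_mul, Nat.mul_one]
      _ ≤ _ := Finset.sum_le_sum (fun x hx => h1 x (Finset.mem_of_mem_erase hx))
  have hsum := Finset.add_sum_erase S f hs
  have hcard := Finset.card_erase_of_mem hs
  have := h1 s hs
  omega

lemma child_in_cov (hT : T.PerfectUnitLength α) {t : ℕ} (ht1 : 1 ≤ t) (htα : t ≤ α)
    {w a : V} (hw : T.hgt w = ((t - 1 : ℕ) : ℝ)) (ha : T.IsLeaf a) (hanc : T.anc w a) :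
    ∃ u, T.parent u = some w ∧ T.anc u a ∧ T.hgt u = (t : ℝ) := by
  obtain ⟨u, hu1, hu2⟩ := exists_anc_at hT a t (by rw [hT.2.2 a ha]; exact_mod_cast htα)
  have hwreal : T.hgt w = (t : ℝ) - 1 := by
    rw [hw, Nat.cast_sub ht1]; push_cast; ring
  have hwu : T.anc w u := by
    rcases anc_comparable hanc hu1 with h | h
    · exact h
    · have hle := hgt_le_of_anc hT h
      rw [hu2, hwreal] at hle
      linarith
  have hune : u ≠ w := by
    intro h
    rw [h, hwreal] at hu2
    linarith
  rcases Relation.ReflTransGen.cases_head hwu with h | ⟨c, hc, hcw⟩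
  · exact absurd h hune
  · have hcstep : T.hgt u = T.hgt c + 1 := hgt_step hT hc
    have hcw' : T.anc w c := hcw
    have : w = c := eq_of_anc_hgt hT hcw' (by rw [hwreal]; linarith)
    rw [← this] at hc
    exact ⟨u, hc, hu1, hu2⟩

lemma card_covF_eq_of_separated (hT : T.PerfectUnitLength α) {j t : ℕ} (hjα : j ≤ α)
    (htj : t ≤ j) {A S : Finset V} (hAle : A ⊆ T.leavesF) (hS : S ⊆ T.LevF t)
    (hA : A ⊆ S.biUnion T.lbF) (hone : ∀ s ∈ S, (A ∩ T.lbF s).card = 1) :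
    (T.covF j A).card = A.card := by
  apply le_antisymm (card_covF_le_cardA hT j A)
  classical
  set f := fun a => if h : ∃ u, T.anc u a ∧ T.hgt u = (j : ℝ) then h.choose else a with hfdef
  have hf : ∀ a ∈ A, f a ∈ T.covF j A ∧ T.anc (f a) a ∧ T.hgt (f a) = (j : ℝ) := by
    intro a ha
    have haleaf : T.IsLeaf a := mem_leavesF.1 (hAle ha)
    have hex : ∃ u, T.anc u a ∧ T.hgt u = (j : ℝ) := by
      obtain ⟨u, h1, h2⟩ := exists_anc_at hT a j (by rw [hT.2.2 a haleaf]; exact_mod_cast hjα)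
      exact ⟨u, h1, h2⟩
    simp only [hfdef, dif_pos hex]
    obtain ⟨h1, h2⟩ := hex.choose_spec
    exact ⟨mem_covF.2 ⟨h2, a, ha, h1⟩, h1, h2⟩
  apply Finset.card_le_card_of_injOn f (fun a ha => (hf a ha).1)
  intro a ha b hb hab
  rw [Finset.mem_coe] at ha hb
  obtain ⟨sa, hsa, halba⟩ := Finset.mem_biUnion.1 (hA ha)
  obtain ⟨sb, hsb, hblbb⟩ := Finset.mem_biUnion.1 (hA hb)
  have h1 := hf a ha
  have h2 := hf b hb
  have hta : T.hgt sa = (t : ℝ) := mem_LevF.1 (hS hsa)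
  have htb : T.hgt sb = (t : ℝ) := mem_LevF.1 (hS hsb)
  have key : ∀ s x, s ∈ S → x ∈ A → x ∈ T.lbF s → T.anc s (f x) →
      True := fun _ _ _ _ _ _ => trivial
  have hanc_sa_fa : T.anc sa (f a) := by
    rcases anc_comparable (mem_lbF.1 halba).2 h1.2.1 with h | h
    · exact h
    · have hle := hgt_le_of_anc hT h
      rw [h1.2.2, hta] at hle
      have hjt : j ≤ t := by exact_mod_cast hle
      have hjeq : j = t := le_antisymm hjt htj
      have heq : f a = sa := eq_of_anc_hgt hT h (by rw [h1.2.2, hta, hjeq])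
      rw [heq]; exact anc_refl sa
  have hanc_sb_fb : T.anc sb (f b) := by
    rcases anc_comparable (mem_lbF.1 hblbb).2 h2.2.1 with h | h
    · exact h
    · have hle := hgt_le_of_anc hT h
      rw [h2.2.2, htb] at hle
      have hjt : j ≤ t := by exact_mod_cast hle
      have hjeq : j = t := le_antisymm hjt htj
      have heq : f b = sb := eq_of_anc_hgt hT h (by rw [h2.2.2, htb, hjeq])
      rw [heq]; exact anc_refl sb
  have hsab : sa = sb := by
    rw [hab] at hanc_sa_fa
    exact level_anc_unique hT hanc_sa_fa hanc_sb_fb (by rw [hta, htb])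
  rw [← hsab] at hblbb
  obtain ⟨x, hx⟩ := Finset.card_eq_one.1 (hone sa hsa)
  have hax : a ∈ A ∩ T.lbF sa := Finset.mem_inter.2 ⟨ha, halba⟩
  have hbx : b ∈ A ∩ T.lbF sa := Finset.mem_inter.2 ⟨hb, hblbb⟩
  rw [hx, Finset.mem_singleton] at hax hbx
  rw [hax, hbx]

lemma m_formula (hT : T.PerfectUnitLength α) {t k : ℕ} (ht1 : 1 ≤ t) (htα : t ≤ α)
    (hk1 : 2 ^ (t - 1) ≤ k) (hk2 : k ≤ 2 ^ t) :
    T.m k = (2 ^ (t - 1)).choose (k - 2 ^ (t - 1))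
        * 2 ^ (2 ^ (t - 1) - (k - 2 ^ (t - 1))) * (2 ^ (α - t)) ^ k := by
  have hkα : k ≤ 2 ^ α := le_trans hk2 (Nat.pow_le_pow_right (by norm_num) htα)
  rw [m_eq_card hT hkα]
  set SS := (T.LevF t).powerset.filter (fun S => S.card = k ∧
      ∀ w ∈ T.LevF (t - 1), ∃ s ∈ S, T.parent s = some w) with hSS
  set AS := fun S : Finset V => ((S.biUnion T.lbF).powerset.filter
      (fun A => ∀ s ∈ S, (A ∩ T.lbF s).card = 1)) with hAS
  have hSS_elim : ∀ S ∈ SS, S ⊆ T.LevF t ∧ S.card = k ∧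
      ∀ w ∈ T.LevF (t - 1), ∃ s ∈ S, T.parent s = some w := by
    intro S hS
    rw [hSS, Finset.mem_filter, Finset.mem_powerset] at hS
    exact ⟨hS.1, hS.2.1, hS.2.2⟩
  have hAS_elim : ∀ S A, A ∈ AS S → A ⊆ S.biUnion T.lbF ∧
      ∀ s ∈ S, (A ∩ T.lbF s).card = 1 := by
    intro S A hA
    simp only [hAS] at hA
    rw [Finset.mem_filter, Finset.mem_powerset] at hA
    exact hA
  -- recovery of S from A
  have hrecov : ∀ S A, S ⊆ T.LevF t → A ∈ AS S → T.covF t A = S := by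
    intro S A hSsub hA
    obtain ⟨hAsub, hone⟩ := hAS_elim S A hA
    ext v
    rw [mem_covF]
    constructor
    · rintro ⟨hv, a, ha, hva⟩
      obtain ⟨s, hs, halb⟩ := Finset.mem_biUnion.1 (hAsub ha)
      have : v = s := level_anc_unique hT hva (mem_lbF.1 halb).2
        (by rw [hv, mem_LevF.1 (hSsub hs)])
      rw [this]; exact hs
    · intro hv
      obtain ⟨a, ha⟩ := Finset.card_pos.1 (by rw [hone v hv]; norm_num)
      rw [Finset.mem_inter] at ha
      exact ⟨mem_LevF.1 (hSsub hv), a, ha.1, (mem_lbF.1 ha.2).2⟩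
  -- A ⊆ leaves for AS members
  have hAleaves : ∀ S A, A ∈ AS S → A ⊆ T.leavesF := by
    intro S A hA a ha
    obtain ⟨hAsub, _⟩ := hAS_elim S A hA
    obtain ⟨s, _, h⟩ := Finset.mem_biUnion.1 (hAsub ha)
    exact lbF_subset_leavesF s h
  -- cardinality of AS members
  have hAScardk : ∀ S A, S ⊆ T.LevF t → A ∈ AS S → A.card = S.card := by
    intro S A hSsub hA
    obtain ⟨hAsub, hone⟩ := hAS_elim S A hA
    have hA_eq : A = S.biUnion (fun s => A ∩ T.lbF s) := by
      ext a
      simp only [Finset.mem_biUnion, Finset.mem_inter]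
      constructor
      · intro ha
        obtain ⟨s, hs, hlb⟩ := Finset.mem_biUnion.1 (hAsub ha)
        exact ⟨s, hs, ha, hlb⟩
      · rintro ⟨s, _, ha, _⟩; exact ha
    conv_lhs => rw [hA_eq]
    rw [Finset.card_biUnion]
    · rw [Finset.sum_congr rfl hone, Finset.sum_const, smul_eq_mul, Nat.mul_one]
    · intro s hs s' hs' hss'
      exact Finset.disjoint_of_subset_left Finset.inter_subset_right
        (Finset.disjoint_of_subset_right Finset.inter_subset_right
          (lbF_disjoint hT (by rw [mem_LevF.1 (hSsub hs), mem_LevF.1 (hSsub hs')]) hss'))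
  have hmain : Finset.univ.filter (fun B : Finset V => T.goodF α k B) = SS.biUnion AS := by
    ext A
    rw [Finset.mem_filter, Finset.mem_biUnion]
    constructor
    · rintro ⟨-, hAl, hAk, hAcov⟩
      have hScard : (T.covF t A).card = k := by rw [hAcov t ht1 htα, min_eq_right hk2]
      have hSsub : T.covF t A ⊆ T.LevF t := covF_subset_LevF
      have hcovw : ∀ w ∈ T.LevF (t - 1), ∃ a ∈ A, T.anc w a := by
        intro w hw
        by_cases ht2 : 2 ≤ t
        · have hfull : (T.covF (t - 1) A).card = (T.LevF (t - 1)).card := by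
            rw [hAcov (t - 1) (by omega) (by omega), min_eq_left hk1,
              card_LevF hT (t - 1) (by omega)]
          have heq : T.covF (t - 1) A = T.LevF (t - 1) :=
            Finset.eq_of_subset_of_card_le covF_subset_LevF (le_of_eq hfull.symm)
          rw [← heq] at hw
          obtain ⟨-, a, ha, hanc⟩ := mem_covF.1 hw
          exact ⟨a, ha, hanc⟩
        · have ht1' : t - 1 = 0 := by omega
          have hwroot : w = T.root := by
            rw [ht1', LevF_zero hT] at hw
            exact Finset.mem_singleton.1 hw
          have hk0 : 1 ≤ k := le_trans (Nat.one_le_two_pow) hk1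
          obtain ⟨a, ha⟩ := Finset.card_pos.1 (by rw [hAk]; omega)
          exact ⟨a, ha, by rw [hwroot]; exact T.reaches_root a⟩
      have hScov : ∀ w ∈ T.LevF (t - 1), ∃ s ∈ T.covF t A, T.parent s = some w := by
        intro w hw
        obtain ⟨a, ha, hanc⟩ := hcovw w hw
        obtain ⟨u, hpu, hua, hut⟩ := child_in_cov hT ht1 htα (mem_LevF.1 hw)
          (mem_leavesF.1 (hAl ha)) hanc
        exact ⟨u, mem_covF.2 ⟨hut, a, ha, hua⟩, hpu⟩
      have hAsub : A ⊆ (T.covF t A).biUnion T.lbF := by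
        intro a ha
        have haleaf := mem_leavesF.1 (hAl ha)
        obtain ⟨u, hu1, hu2⟩ := exists_anc_at hT a t
          (by rw [hT.2.2 a haleaf]; exact_mod_cast htα)
        exact Finset.mem_biUnion.2 ⟨u, mem_covF.2 ⟨hu2, a, ha, hu1⟩,
          mem_lbF.2 ⟨haleaf, hu1⟩⟩
      have hone : ∀ s ∈ T.covF t A, (A ∩ T.lbF s).card = 1 := by
        have hA_eq : A = (T.covF t A).biUnion (fun s => A ∩ T.lbF s) := by
          ext a
          simp only [Finset.mem_biUnion, Finset.mem_inter]
          constructor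
          · intro ha
            obtain ⟨s, hs, hlb⟩ := Finset.mem_biUnion.1 (hAsub ha)
            exact ⟨s, hs, ha, hlb⟩
          · rintro ⟨s, _, ha, _⟩; exact ha
        have hsum : ∑ s ∈ T.covF t A, (A ∩ T.lbF s).card = (T.covF t A).card := by
          rw [hScard, ← hAk]
          conv_rhs => rw [hA_eq]
          rw [Finset.card_biUnion]
          intro s hs s' hs' hss'
          exact Finset.disjoint_of_subset_left Finset.inter_subset_right
            (Finset.disjoint_of_subset_right Finset.inter_subset_right
              (lbF_disjoint hT (by rw [mem_LevF.1 (hSsub hs), mem_LevF.1 (hSsub hs')]) hss'))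
        have hge : ∀ s ∈ T.covF t A, 1 ≤ (A ∩ T.lbF s).card := by
          intro s hs
          obtain ⟨-, a, ha, hanc⟩ := mem_covF.1 hs
          exact Finset.card_pos.2 ⟨a, Finset.mem_inter.2
            ⟨ha, mem_lbF.2 ⟨mem_leavesF.1 (hAl ha), hanc⟩⟩⟩
        exact all_one hge hsum
      refine ⟨T.covF t A, ?_, ?_⟩
      · rw [hSS, Finset.mem_filter, Finset.mem_powerset]
        exact ⟨hSsub, hScard, hScov⟩
      · simp only [hAS]
        rw [Finset.mem_filter, Finset.mem_powerset]
        exact ⟨hAsub, hone⟩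
    · rintro ⟨S, hSmem, hAmem⟩
      obtain ⟨hSsub, hScard, hScov⟩ := hSS_elim S hSmem
      obtain ⟨hAsub, hone⟩ := hAS_elim S A hAmem
      have hAl : A ⊆ T.leavesF := hAleaves S A hAmem
      have hAk : A.card = k := by rw [hAScardk S A hSsub hAmem, hScard]
      refine ⟨Finset.mem_univ A, hAl, hAk, ?_⟩
      intro j hj1 hjα
      by_cases hjt : t ≤ j
      · rw [card_covF_eq_of_separated hT hjα hjt hAl hSsub hAsub hone, hAk,
          min_eq_right (le_trans hk2 (Nat.pow_le_pow_right (by norm_num) hjt))]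
      · push_neg at hjt
        have hcovfull : T.LevF j ⊆ T.covF j A := by
          intro w hw
          obtain ⟨x, hxleaf, hxanc⟩ := exists_leaf_below hT w
          obtain ⟨u, hu_anc, hu_h⟩ := exists_anc_at hT x (t - 1)
            (by rw [hT.2.2 x hxleaf]; exact_mod_cast (by omega : t - 1 ≤ α))
          have hwu : T.anc w u := by
            rcases anc_comparable hxanc hu_anc with h | h
            · exact h
            · have hle := hgt_le_of_anc hT h
              rw [hu_h, mem_LevF.1 hw] at hle
              have hj' : (t - 1 : ℕ) ≤ j := by exact_mod_cast hle
              have hjeq : t - 1 = j := by omega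
              have heq : u = w := eq_of_anc_hgt hT h (by rw [hu_h, mem_LevF.1 hw, hjeq])
              rw [← heq]; exact anc_refl u
          obtain ⟨s, hsS, hps⟩ := hScov u (mem_LevF.2 hu_h)
          obtain ⟨a, ha⟩ := Finset.card_pos.1 (by rw [hone s hsS]; norm_num)
          rw [Finset.mem_inter] at ha
          exact mem_covF.2 ⟨mem_LevF.1 hw, a, ha.1,
            anc_trans (anc_trans hwu (anc_of_parent hps)) (mem_lbF.1 ha.2).2⟩
        have heqlev : T.covF j A = T.LevF j :=
          Finset.Subset.antisymm covF_subset_LevF hcovfull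
        rw [heqlev, card_LevF hT j (by omega),
          min_eq_left (le_trans (Nat.pow_le_pow_right (by norm_num) (by omega : j ≤ t - 1)) hk1)]
  rw [hmain, Finset.card_biUnion]
  · have hAScard : ∀ S ∈ SS, (AS S).card = (2 ^ (α - t)) ^ k := by
      intro S hSmem
      obtain ⟨hSsub, hScard, -⟩ := hSS_elim S hSmem
      have hsel := card_selectors S T.lbF
        (fun s hs s' hs' h =>
          lbF_disjoint hT (by rw [mem_LevF.1 (hSsub hs), mem_LevF.1 (hSsub hs')]) h)
      have h9 : (AS S).card = ∏ s ∈ S, (T.lbF s).card := by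
        simp only [hAS]
        convert hsel using 3
      rw [h9, Finset.prod_congr rfl
        (fun s hs => card_lbF' hT (mem_LevF.1 (hSsub hs)) htα),
        Finset.prod_const, hScard]
    rw [Finset.sum_congr rfl hAScard, Finset.sum_const, smul_eq_mul]
    have hSScard : SS.card = (2 ^ (t - 1)).choose (k - 2 ^ (t - 1))
        * 2 ^ (2 ^ (t - 1) - (k - 2 ^ (t - 1))) := by
      rw [hSS]
      exact card_SS hT ht1 htα hk1 hk2
    rw [hSScard]
  · intro S hS S' hS' hSS'
    rw [Function.onFun, Finset.disjoint_left]
    intro A hA hA'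
    apply hSS'
    rw [← hrecov S A (hSS_elim S hS).1 hA, ← hrecov S' A (hSS_elim S' hS').1 hA']

end PhyloTree
namespace PhyloTree

open Finset

variable {V : Type} [Fintype V] [DecidableEq V] {T : PhyloTree V} {α : ℕ}

lemma choose_double (p : ℕ) : ∀ a, a ≤ p → p.choose a * 2 ^ a ≤ (2 * p).choose a := by
  intro a
  induction a with
  | zero => intro _; simp
  | succ a ih =>
      intro ha
      have ha' : a ≤ p := by omega
      have h1 : (2 * p).choose (a + 1) * (a + 1) = (2 * p).choose a * (2 * p - a) :=
        Nat.choose_succ_right_eq (2 * p) a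
      have h2 : p.choose (a + 1) * (a + 1) = p.choose a * (p - a) :=
        Nat.choose_succ_right_eq p a
      have key : p.choose (a + 1) * 2 ^ (a + 1) * (a + 1) ≤ (2 * p).choose (a + 1) * (a + 1) := by
        calc p.choose (a + 1) * 2 ^ (a + 1) * (a + 1)
            = (p.choose (a + 1) * (a + 1)) * 2 ^ (a + 1) := by ring
          _ = p.choose a * (p - a) * 2 ^ (a + 1) := by rw [h2]
          _ = (p.choose a * 2 ^ a) * (2 * (p - a)) := by ring
          _ ≤ (2 * p).choose a * (2 * p - a) := by
              apply Nat.mul_le_mul (ih ha')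
              omega
          _ = (2 * p).choose (a + 1) * (a + 1) := h1.symm
      exact Nat.le_of_mul_le_mul_right key (by omega)

lemma numeric_step (p k s' : ℕ) (h1 : p ≤ k) (h2 : k ≤ 2 * p) :
    p.choose (k - p) * 2 ^ ((p - (k - p)) + (s' + 1) * k)
      ≤ (2 * p).choose (k - p) * 2 ^ ((2 * p - (k - p)) + s' * (k + p)) := by
  set a := k - p with hadef
  have ha : a ≤ p := by omega
  have hE : (p - a) + (s' + 1) * k + s' * p = a + ((2 * p - a) + s' * (k + p)) := by
    have h3 : (s' + 1) * k = s' * k + k := by ring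
    have h4 : s' * (k + p) = s' * k + s' * p := by ring
    rw [h3, h4]
    omega
  calc p.choose a * 2 ^ ((p - a) + (s' + 1) * k)
      ≤ p.choose a * 2 ^ ((p - a) + (s' + 1) * k) * 2 ^ (s' * p) :=
        Nat.le_mul_of_pos_right _ (by positivity)
    _ = p.choose a * 2 ^ a * 2 ^ ((2 * p - a) + s' * (k + p)) := by
        rw [mul_assoc, ← pow_add, mul_assoc, ← pow_add, hE]
    _ ≤ (2 * p).choose a * 2 ^ ((2 * p - a) + s' * (k + p)) :=
        Nat.mul_le_mul_right _ (choose_double p a ha)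

lemma m_step_up (hT : T.PerfectUnitLength α) {t k : ℕ} (ht1 : 1 ≤ t) (htα : t + 1 ≤ α)
    (hk1 : 2 ^ (t - 1) ≤ k) (hk2 : k ≤ 2 ^ t) :
    T.m k ≤ T.m (k + 2 ^ (t - 1)) := by
  have h2p : (2 : ℕ) ^ t = 2 * 2 ^ (t - 1) := by
    rw [← pow_succ']
    congr 1
    omega
  have e1 : (t + 1) - 1 = t := by omega
  have hL := m_formula hT ht1 (by omega) hk1 hk2
  have hRk1 : 2 ^ ((t + 1) - 1) ≤ k + 2 ^ (t - 1) := by rw [e1, h2p]; omega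
  have hRk2 : k + 2 ^ (t - 1) ≤ 2 ^ (t + 1) := by
    have h4 : (2 : ℕ) ^ (t + 1) = 2 * 2 ^ t := by rw [pow_succ]; ring
    rw [h4, h2p]
    omega
  have hR := m_formula hT (t := t + 1) (k := k + 2 ^ (t - 1)) (by omega) htα hRk1 hRk2
  rw [hL, hR, e1, h2p]
  have e2 : k + 2 ^ (t - 1) - 2 * 2 ^ (t - 1) = k - 2 ^ (t - 1) := by omega
  rw [e2]
  have e3 : α - t = (α - t - 1) + 1 := by omega
  have e4 : α - (t + 1) = α - t - 1 := by omega
  rw [e3, e4]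
  set p := 2 ^ (t - 1) with hp
  set s' := α - t - 1 with hs'
  have hnum := numeric_step p k s' hk1 (by omega)
  have e5 : k + p = p + (k + p) - p := by omega
  calc p.choose (k - p) * 2 ^ (p - (k - p)) * (2 ^ (s' + 1)) ^ k
      = p.choose (k - p) * 2 ^ ((p - (k - p)) + (s' + 1) * k) := by
        rw [← pow_mul, mul_assoc, ← pow_add]
    _ ≤ (2 * p).choose (k - p) * 2 ^ ((2 * p - (k - p)) + s' * (k + p)) := hnum
    _ = (2 * p).choose (k - p) * 2 ^ (2 * p - (k - p)) * (2 ^ s') ^ (k + p) := by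
        rw [← pow_mul, mul_assoc, ← pow_add]

lemma top_rec (hT : T.PerfectUnitLength α) (hα : 1 ≤ α) {k : ℕ}
    (h1 : 2 ^ (α - 1) ≤ k) (h2 : k < 2 ^ α) :
    2 * (k - 2 ^ (α - 1) + 1) * T.m (k + 1)
      = (2 ^ (α - 1) - (k - 2 ^ (α - 1))) * T.m k := by
  have hmk := m_formula hT (t := α) hα le_rfl h1 (le_of_lt h2)
  have hmk1 := m_formula hT (t := α) (k := k + 1) hα le_rfl (by omega) h2
  rw [hmk, hmk1]
  simp only [Nat.sub_self, pow_zero, one_pow, mul_one]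
  set q := 2 ^ (α - 1) with hq
  set b := k - q with hb
  have e1 : k + 1 - q = b + 1 := by omega
  rw [e1]
  have hbq : b + 1 ≤ q := by
    have h2q : (2 : ℕ) ^ α = 2 * q := by rw [hq, ← pow_succ']; congr 1; omega
    omega
  have hpow : 2 ^ (q - b) = 2 * 2 ^ (q - (b + 1)) := by
    rw [← pow_succ']
    congr 1
    omega
  calc 2 * (b + 1) * (q.choose (b + 1) * 2 ^ (q - (b + 1)))
      = (q.choose (b + 1) * (b + 1)) * (2 * 2 ^ (q - (b + 1))) := by ring
    _ = (q.choose b * (q - b)) * 2 ^ (q - b) := by rw [Nat.choose_succ_right_eq, ← hpow]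
    _ = (q - b) * (q.choose b * 2 ^ (q - b)) := by ring

lemma top_step_up (hT : T.PerfectUnitLength α) (hα : 1 ≤ α) {k : ℕ}
    (h1 : 2 ^ (α - 1) ≤ k) (h2 : k < 2 ^ α) (h3 : 3 * k + 2 ≤ 2 * 2 ^ α) :
    T.m k ≤ T.m (k + 1) := by
  have hrec := top_rec hT hα h1 h2
  have h2q : (2 : ℕ) ^ α = 2 * 2 ^ (α - 1) := by rw [← pow_succ']; congr 1; omega
  have hle : 2 * (k - 2 ^ (α - 1) + 1) ≤ 2 ^ (α - 1) - (k - 2 ^ (α - 1)) := by omega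
  have hpos : 0 < 2 ^ (α - 1) - (k - 2 ^ (α - 1)) := by omega
  have hmul : (2 ^ (α - 1) - (k - 2 ^ (α - 1))) * T.m k
      ≤ (2 ^ (α - 1) - (k - 2 ^ (α - 1))) * T.m (k + 1) := by
    rw [← hrec]
    exact Nat.mul_le_mul_right _ hle
  exact Nat.le_of_mul_le_mul_left hmul hpos

lemma top_step_down (hT : T.PerfectUnitLength α) (hα : 1 ≤ α) {k : ℕ}
    (h1 : 2 ^ (α - 1) ≤ k) (h2 : k < 2 ^ α) (h3 : 2 * 2 ^ α ≤ 3 * k + 2) :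
    T.m (k + 1) ≤ T.m k := by
  have hrec := top_rec hT hα h1 h2
  have h2q : (2 : ℕ) ^ α = 2 * 2 ^ (α - 1) := by rw [← pow_succ']; congr 1; omega
  have hge : 2 ^ (α - 1) - (k - 2 ^ (α - 1)) ≤ 2 * (k - 2 ^ (α - 1) + 1) := by omega
  have hpos : 0 < 2 * (k - 2 ^ (α - 1) + 1) := by omega
  have hmul : 2 * (k - 2 ^ (α - 1) + 1) * T.m (k + 1)
      ≤ 2 * (k - 2 ^ (α - 1) + 1) * T.m k := by
    rw [hrec]
    exact Nat.mul_le_mul_right _ hge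
  exact Nat.le_of_mul_le_mul_left hmul hpos

lemma top_eq (hT : T.PerfectUnitLength α) (hα : 1 ≤ α) {k : ℕ}
    (h1 : 2 ^ (α - 1) ≤ k) (h2 : k < 2 ^ α) (h3 : 3 * k + 2 = 2 * 2 ^ α) :
    T.m (k + 1) = T.m k := by
  have hrec := top_rec hT hα h1 h2
  have h2q : (2 : ℕ) ^ α = 2 * 2 ^ (α - 1) := by rw [← pow_succ']; congr 1; omega
  have heqc : 2 * (k - 2 ^ (α - 1) + 1) = 2 ^ (α - 1) - (k - 2 ^ (α - 1)) := by omega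
  have hpos : 0 < 2 * (k - 2 ^ (α - 1) + 1) := by omega
  apply Nat.eq_of_mul_eq_mul_left hpos
  rw [hrec, heqc]

lemma top_le (hT : T.PerfectUnitLength α) (hα : 1 ≤ α) {k : ℕ}
    (h1 : 2 ^ (α - 1) ≤ k) (h2 : k ≤ 2 ^ α) :
    T.m k ≤ T.m (2 * 2 ^ α / 3) := by
  have h2q : (2 : ℕ) ^ α = 2 * 2 ^ (α - 1) := by rw [← pow_succ']; congr 1; omega
  have hk0n : 2 * 2 ^ α / 3 ≤ 2 ^ α := by omega
  have hqk0 : 2 ^ (α - 1) ≤ 2 * 2 ^ α / 3 := by omega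
  rcases le_or_gt k (2 * 2 ^ α / 3) with hle | hlt
  · have H : ∀ d k, 2 ^ (α - 1) ≤ k → k + d = 2 * 2 ^ α / 3 →
        T.m k ≤ T.m (2 * 2 ^ α / 3) := by
      intro d
      induction d with
      | zero =>
          intro k _ h
          rw [show k = 2 * 2 ^ α / 3 from by omega]
      | succ d ih =>
          intro k hk h
          have hstep : T.m k ≤ T.m (k + 1) :=
            top_step_up hT hα hk (by omega) (by omega)
          exact le_trans hstep (ih (k + 1) (by omega) (by omega))
    exact H (2 * 2 ^ α / 3 - k) k h1 (by omega)
  · have H : ∀ d k, k = 2 * 2 ^ α / 3 + d → k ≤ 2 ^ α →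
        T.m k ≤ T.m (2 * 2 ^ α / 3) := by
      intro d
      induction d with
      | zero =>
          intro k h _
          rw [show k = 2 * 2 ^ α / 3 from by omega]
      | succ d ih =>
          intro k h hk
          have hstep : T.m k ≤ T.m (k - 1) := by
            have e : k = (k - 1) + 1 := by omega
            rw [e]
            exact top_step_down hT hα (by omega) (by omega) (by omega)
          exact le_trans hstep (ih (k - 1) (by omega) (by omega))
    exact H (k - 2 * 2 ^ α / 3) k (by omega) h2

lemma m_le_k0 (hT : T.PerfectUnitLength α) (hα : 1 ≤ α) :
    ∀ k, 1 ≤ k → k ≤ 2 ^ α → T.m k ≤ T.m (2 * 2 ^ α / 3) := by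
  have H : ∀ d k, 1 ≤ k → k ≤ 2 ^ α → 2 ^ α - k ≤ d → T.m k ≤ T.m (2 * 2 ^ α / 3) := by
    intro d
    induction d with
    | zero =>
        intro k h1 h2 h3
        have hk : k = 2 ^ α := by omega
        rw [hk]
        exact top_le hT hα (Nat.pow_le_pow_right (by norm_num) (by omega)) le_rfl
    | succ d ih =>
        intro k h1 h2 h3
        by_cases htop : 2 ^ (α - 1) ≤ k
        · exact top_le hT hα htop h2
        · push_neg at htop
          have hex : ∃ t, 1 ≤ t ∧ t + 1 ≤ α ∧ 2 ^ (t - 1) ≤ k ∧ k ≤ 2 ^ t := by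
            rcases Nat.lt_or_ge k 2 with hk2 | hk2
            · have hα2 : 2 ≤ α := by
                by_contra h
                have hα1 : α = 1 := by omega
                rw [hα1] at htop
                simp at htop
                omega
              refine ⟨1, le_rfl, by omega, ?_, ?_⟩
              · simpa using h1
              · have e : (2 : ℕ) ^ 1 = 2 := by norm_num
                omega
            · refine ⟨Nat.clog 2 k, ?_, ?_, ?_, Nat.le_pow_clog (by norm_num) k⟩
              · by_contra h
                push_neg at h
                have ht0 : Nat.clog 2 k = 0 := by omega
                have hle := Nat.le_pow_clog (by norm_num : 1 < 2) k
                rw [ht0] at hle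
                norm_num at hle
                omega
              · have hlt : 2 ^ (Nat.clog 2 k - 1) < 2 ^ (α - 1) :=
                  lt_trans (Nat.pow_pred_clog_lt_self (by norm_num) (by omega)) htop
                have := (Nat.pow_lt_pow_iff_right (by norm_num : 1 < 2)).1 hlt
                omega
              · exact le_of_lt (Nat.pow_pred_clog_lt_self (by norm_num) (by omega))
          obtain ⟨t, ht1, htα, hk1', hk2'⟩ := hex
          have hstep := m_step_up hT ht1 htα hk1' hk2'
          have hp1 : 1 ≤ (2 : ℕ) ^ (t - 1) := Nat.one_le_two_pow
          have hnext_le : k + 2 ^ (t - 1) ≤ 2 ^ α := by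
            have h5 : (2 : ℕ) ^ t = 2 * 2 ^ (t - 1) := by rw [← pow_succ']; congr 1; omega
            have h6 : (2 : ℕ) ^ (t + 1) = 2 * 2 ^ t := by rw [pow_succ]; ring
            have h7 : (2 : ℕ) ^ (t + 1) ≤ 2 ^ α := Nat.pow_le_pow_right (by norm_num) htα
            omega
          exact le_trans hstep (ih (k + 2 ^ (t - 1)) (by omega) hnext_le (by omega))
  intro k h1 h2
  exact H (2 ^ α - k) k h1 h2 le_rfl

lemma m_zero (T : PhyloTree V) : T.m 0 = 1 := by
  unfold m
  have hset : {A : Set V | T.IsMaxPD 0 A} = {(∅ : Set V)} := by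
    ext A
    simp only [Set.mem_setOf_eq, Set.mem_singleton_iff]
    constructor
    · rintro ⟨hsub, hcard, _⟩
      exact (Set.ncard_eq_zero (Set.toFinite A)).1 hcard
    · rintro rfl
      refine ⟨Set.empty_subset _, Set.ncard_empty _, ?_⟩
      intro Y hY hYk
      have hY0 : Y = ∅ := (Set.ncard_eq_zero (Set.toFinite Y)).1 hYk
      rw [hY0]
  rw [hset, Set.ncard_singleton]

lemma card_leavesF (hT : T.PerfectUnitLength α) : T.leavesF.card = 2 ^ α := by
  have hset : T.leavesF = T.lbF T.root := by
    ext x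
    rw [mem_leavesF, mem_lbF]
    exact ⟨fun h => ⟨h, T.reaches_root x⟩, fun h => h.1⟩
  rw [hset, card_lbF' hT (j := 0) (by rw [T.hgt_root]; simp) (by omega)]
  simp

lemma m_one_alpha_zero (hT : T.PerfectUnitLength 0) : T.m 1 = 1 := by
  rw [m_eq_card hT (by norm_num)]
  have hl1 : T.leavesF.card = 1 := by
    have := card_leavesF hT
    simpa using this
  have hset : Finset.univ.filter (fun B : Finset V => T.goodF 0 1 B) = {T.leavesF} := by
    ext A
    simp only [Finset.mem_filter, Finset.mem_univ, true_and, Finset.mem_singleton]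
    constructor
    · rintro ⟨hsub, hcard, _⟩
      exact Finset.eq_of_subset_of_card_le hsub (by omega)
    · rintro rfl
      exact ⟨Finset.Subset.refl _, hl1, fun j hj1 hj0 => by omega⟩
  rw [hset, Finset.card_singleton]

lemma eq_part (hT : T.PerfectUnitLength α) (hα : 2 ≤ α) (hmod : (2 : ℕ) ^ α % 3 = 1) :
    T.m (2 * 2 ^ α / 3 + 1) = T.m (2 * 2 ^ α / 3) := by
  have h2q : (2 : ℕ) ^ α = 2 * 2 ^ (α - 1) := by rw [← pow_succ']; congr 1; omega
  have h4 : 4 ≤ 2 ^ α := by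
    calc (4 : ℕ) = 2 ^ 2 := by norm_num
      _ ≤ 2 ^ α := Nat.pow_le_pow_right (by norm_num) hα
  exact top_eq hT (by omega) (by omega) (by omega) (by omega)

end PhyloTree
/-- Proposition 3 of the paper, maximising part.  For a
perfect unit-length tree of height `α` on `n = 2^α` leaves, the value
`k = ⌊2n/3⌋` maximises `m(T,k)` over `k ∈ {1,…,n}` and, when `n ≡ 1 (mod 3)`,
the value `k = ⌊2n/3⌋ + 1` attains the same (maximum) value. -/
theorem m_perfect_unit_length_maximisers
    {V : Type} [Fintype V] [DecidableEq V] (T : PhyloTree V)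
    (α : ℕ) (hT : T.PerfectUnitLength α) (n : ℕ) (hn : n = 2 ^ α)
    (hn' : T.leaves.ncard = n) :
    (∀ k, 1 ≤ k → k ≤ n → T.m k ≤ T.m (2 * n / 3)) ∧
    (n % 3 = 1 → T.m (2 * n / 3 + 1) = T.m (2 * n / 3)) := by
  subst hn
  rcases Nat.eq_zero_or_pos α with rfl | hα
  · have e0 : 2 * 2 ^ 0 / 3 = 0 := by norm_num
    constructor
    · intro k hk1 hk2
      have hk : k = 1 := by
        have : (2 : ℕ) ^ 0 = 1 := by norm_num
        omega
      rw [hk, e0, PhyloTree.m_zero, PhyloTree.m_one_alpha_zero hT]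
    · intro _
      rw [e0, PhyloTree.m_zero, PhyloTree.m_one_alpha_zero hT]
  · constructor
    · intro k hk1 hk2
      exact PhyloTree.m_le_k0 hT hα k hk1 hk2
    · intro hmod
      have hα2 : 2 ≤ α := by
        by_contra h
        have hα1 : α = 1 := by omega
        rw [hα1] at hmod
        norm_num at hmod
      exact PhyloTree.eq_part hT hα2 hmod
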